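/- arXiv:2101.06139 — 6 statements merged into one kernel-verified Lean document; each statement's English description precedes it below -/
import Mathlib

section
/- Let V be a nonempty finite set and let P be a V×V real matrix that is nonnegative (P(j,i) ≥ 0 for all j,i), column stochastic (Σ_{j∈V} P(j,i) = 1 for every i ∈ V), and primitive (there exists m ≥ 1 such that every entry of P^m is strictly positive). Let x₀ : V → ℝ and define x(k) = P^k x₀ and y(k) = P^k 𝟙, where 𝟙 is the all-ones vector. Then for every j ∈ V, the ratio x(k)_j / y(k)_j converges, as k → ∞, to (Σ_{ℓ∈V} x₀(ℓ)) / |V|. -/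
open Filter Matrix Finset

private lemma wavg_le {V : Type*} [Fintype V] [DecidableEq V] (w v : V → ℝ) (hw : ∀ i, 0 ≤ w i)
    (hs : 0 < ∑ i, w i) {M c : ℝ} (hv : ∀ i, v i ≤ M) (i0 : V) (hc : 0 ≤ c)
    (hci : c * ∑ i, w i ≤ w i0) :
    (∑ i, w i * v i) / (∑ i, w i) ≤ M - c * (M - v i0) := by
  rw [div_le_iff₀ hs]
  have h1 : ∑ i ∈ Finset.univ.erase i0, w i * (v i - M) ≤ 0 :=
    Finset.sum_nonpos fun i _ => mul_nonpos_of_nonneg_of_nonpos (hw i) (by linarith [hv i])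
  have h2 : ∑ i, w i * (v i - M) ≤ w i0 * (v i0 - M) := by
    rw [← Finset.sum_erase_add _ _ (Finset.mem_univ i0)]
    linarith
  have h3 : w i0 * (v i0 - M) ≤ (c * ∑ i, w i) * (v i0 - M) :=
    mul_le_mul_of_nonpos_right hci (by linarith [hv i0])
  have h4 : ∑ i, w i * (v i - M) = (∑ i, w i * v i) - (∑ i, w i) * M := by
    rw [Finset.sum_mul, ← Finset.sum_sub_distrib]
    congr 1; ext i; ring
  nlinarith [hs]

private lemma wavg_ge {V : Type*} [Fintype V] [DecidableEq V] (w v : V → ℝ) (hw : ∀ i, 0 ≤ w i)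
    (hs : 0 < ∑ i, w i) {m c : ℝ} (hv : ∀ i, m ≤ v i) (i0 : V) (hc : 0 ≤ c)
    (hci : c * ∑ i, w i ≤ w i0) :
    m + c * (v i0 - m) ≤ (∑ i, w i * v i) / (∑ i, w i) := by
  rw [le_div_iff₀ hs]
  have h1 : 0 ≤ ∑ i ∈ Finset.univ.erase i0, w i * (v i - m) :=
    Finset.sum_nonneg fun i _ => mul_nonneg (hw i) (by linarith [hv i])
  have h2 : w i0 * (v i0 - m) ≤ ∑ i, w i * (v i - m) := by
    rw [← Finset.sum_erase_add _ _ (Finset.mem_univ i0)]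
    linarith
  have h3 : (c * ∑ i, w i) * (v i0 - m) ≤ w i0 * (v i0 - m) :=
    mul_le_mul_of_nonneg_right hci (by linarith [hv i0])
  have h4 : ∑ i, w i * (v i - m) = (∑ i, w i * v i) - (∑ i, w i) * m := by
    rw [Finset.sum_mul, ← Finset.sum_sub_distrib]
    congr 1; ext i; ring
  nlinarith [hs]

/-- Ratio consensus (Lemma 1): for a primitive column-stochastic matrix `P`,
the entrywise ratio of the iterations `x(k) = P^k x₀` and `y(k) = P^k 𝟙`
converges at every node to the average `(∑ ℓ, x₀ ℓ) / |V|`. -/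
theorem ratio_consensus_average
    {V : Type*} [Fintype V] [DecidableEq V] [Nonempty V]
    (P : Matrix V V ℝ)
    (hnonneg : ∀ j i, 0 ≤ P j i)
    (hcol : ∀ i, ∑ j, P j i = 1)
    (hprim : ∃ m : ℕ, 1 ≤ m ∧ ∀ j i, 0 < (P ^ m) j i)
    (x₀ : V → ℝ) :
    ∀ j : V,
      Tendsto (fun k : ℕ => ((P ^ k) *ᵥ x₀) j / ((P ^ k) *ᵥ (fun _ => (1 : ℝ))) j)
        atTop (nhds ((∑ ℓ, x₀ ℓ) / (Fintype.card V : ℝ))) := by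
  obtain ⟨m, hm1, hmpos⟩ := hprim
  have hpow0 : ∀ (k : ℕ) (j i : V), 0 ≤ (P ^ k) j i := by
    intro k
    induction k with
    | zero => intro j i; simp [Matrix.one_apply]; split <;> norm_num
    | succ n ih =>
      intro j i
      rw [pow_succ, Matrix.mul_apply]
      exact Finset.sum_nonneg fun l _ => mul_nonneg (ih j l) (hnonneg l i)
  have hpowcol : ∀ (k : ℕ) (i : V), ∑ j, (P ^ k) j i = 1 := by
    intro k
    induction k with
    | zero => intro i; simp [Matrix.one_apply]
    | succ n ih =>
      intro i
      simp only [pow_succ, Matrix.mul_apply]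
      rw [Finset.sum_comm]
      calc ∑ l, ∑ j, (P ^ n) j l * P l i
          = ∑ l, (∑ j, (P ^ n) j l) * P l i := by
            congr 1; ext l; rw [Finset.sum_mul]
        _ = ∑ l, P l i := by simp [ih]
        _ = 1 := hcol i
  have hrow : ∀ j : V, ∃ l, 0 < P j l := by
    intro j
    by_contra h
    push_neg at h
    have hz : ∀ l, P j l = 0 := fun l => le_antisymm (h l) (hnonneg j l)
    obtain ⟨n, rfl⟩ : ∃ n, m = n + 1 := ⟨m - 1, (Nat.succ_pred_eq_of_pos hm1).symm⟩
    have hp := hmpos j (Classical.arbitrary V)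
    rw [pow_succ', Matrix.mul_apply] at hp
    simp [hz] at hp
  set y : ℕ → V → ℝ := fun k => (P ^ k) *ᵥ (fun _ => (1 : ℝ)) with hy
  set x : ℕ → V → ℝ := fun k => (P ^ k) *ᵥ x₀ with hx
  have hyrec : ∀ (k : ℕ) (j : V), y (k + 1) j = ∑ i, P j i * y k i := by
    intro k j
    show ((P ^ (k + 1)) *ᵥ _) j = _
    rw [pow_succ', ← Matrix.mulVec_mulVec, Matrix.mulVec, dotProduct]
  have hy_pos : ∀ (k : ℕ) (j : V), 0 < y k j := by
    intro k
    induction k with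
    | zero => intro j; simp [hy]
    | succ n ih =>
      intro j
      rw [hyrec]
      obtain ⟨l, hl⟩ := hrow j
      exact Finset.sum_pos' (fun i _ => mul_nonneg (hnonneg j i) (ih i).le)
        ⟨l, Finset.mem_univ l, mul_pos hl (ih l)⟩
  have hsum : ∀ (k : ℕ) (v : V → ℝ), ∑ j, ((P ^ k) *ᵥ v) j = ∑ i, v i := by
    intro k v
    simp only [Matrix.mulVec, dotProduct]
    rw [Finset.sum_comm]
    calc ∑ i, ∑ j, (P ^ k) j i * v i
        = ∑ i, (∑ j, (P ^ k) j i) * v i := by congr 1; ext i; rw [Finset.sum_mul]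
      _ = ∑ i, v i := by simp [hpowcol]
  have hsumy : ∀ k, ∑ j, y k j = (Fintype.card V : ℝ) := by
    intro k; rw [hy]; simp [hsum k (fun _ => (1 : ℝ)), Finset.card_univ]
  have hsumx : ∀ k, ∑ j, x k j = ∑ i, x₀ i := fun k => hsum k x₀
  set r : ℕ → V → ℝ := fun k j => x k j / y k j with hr
  have hxyr : ∀ (k : ℕ) (i : V), x k i = (y k i) * r k i := by
    intro k i
    rw [hr]
    rw [mul_div_cancel₀ _ (hy_pos k i).ne']
  have hstepy : ∀ (t k : ℕ) (j : V), y (k + t) j = ∑ i, (P ^ t) j i * y k i := by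
    intro t k j
    show ((P ^ (k + t)) *ᵥ _) j = _
    rw [add_comm k t, pow_add, ← Matrix.mulVec_mulVec, Matrix.mulVec, dotProduct]
  have hstepx : ∀ (t k : ℕ) (j : V),
      x (k + t) j = ∑ i, ((P ^ t) j i * y k i) * r k i := by
    intro t k j
    have h : x (k + t) j = ∑ i, (P ^ t) j i * x k i := by
      show ((P ^ (k + t)) *ᵥ _) j = _
      rw [add_comm k t, pow_add, ← Matrix.mulVec_mulVec, Matrix.mulVec, dotProduct]
    rw [h]
    congr 1; ext i; rw [hxyr k i]; ring
  -- sup and inf of ratios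
  set Mf : ℕ → ℝ := fun k => Finset.univ.sup' Finset.univ_nonempty (r k) with hMf
  set mf : ℕ → ℝ := fun k => Finset.univ.inf' Finset.univ_nonempty (r k) with hmf
  have hrle : ∀ (k : ℕ) (j : V), r k j ≤ Mf k := fun k j => Finset.le_sup' _ (Finset.mem_univ j)
  have hrge : ∀ (k : ℕ) (j : V), mf k ≤ r k j := fun k j => Finset.inf'_le _ (Finset.mem_univ j)
  have hmM : ∀ k, mf k ≤ Mf k := fun k =>
    le_trans (hrge k (Classical.arbitrary V)) (hrle k (Classical.arbitrary V))
  -- key step bound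
  have hkey : ∀ (t k : ℕ) (j : V) (c : ℝ), 0 ≤ c →
      (∀ i, c * y (k + t) j ≤ (P ^ t) j i * y k i) →
      r (k + t) j ≤ Mf k - c * (Mf k - mf k) ∧ mf k + c * (Mf k - mf k) ≤ r (k + t) j := by
    intro t k j c hc hw
    set w : V → ℝ := fun i => (P ^ t) j i * y k i with hwdef
    have hw0 : ∀ i, 0 ≤ w i := fun i => mul_nonneg (hpow0 t j i) (hy_pos k i).le
    have hsw : y (k + t) j = ∑ i, w i := hstepy t k j
    have hswpos : 0 < ∑ i, w i := hsw ▸ hy_pos (k + t) j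
    have hrkt : r (k + t) j = (∑ i, w i * r k i) / (∑ i, w i) := by
      rw [hr]
      show x (k + t) j / y (k + t) j = _
      rw [hstepx t k j, hsw]
    obtain ⟨jmin, _, hjmin⟩ := Finset.exists_mem_eq_inf' (Finset.univ_nonempty (α := V)) (r k)
    obtain ⟨jmax, _, hjmax⟩ := Finset.exists_mem_eq_sup' (Finset.univ_nonempty (α := V)) (r k)
    constructor
    · rw [hrkt]
      have := wavg_le w (r k) hw0 hswpos (fun i => hrle k i) jmin hc (by
        calc c * ∑ i, w i = c * y (k + t) j := by rw [hsw]
          _ ≤ w jmin := hw jmin)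
      have hjm : r k jmin = mf k := hjmin.symm
      rw [hjm] at this
      exact this
    · rw [hrkt]
      have := wavg_ge w (r k) hw0 hswpos (fun i => hrge k i) jmax hc (by
        calc c * ∑ i, w i = c * y (k + t) j := by rw [hsw]
          _ ≤ w jmax := hw jmax)
      have hjm : r k jmax = Mf k := hjmax.symm
      rw [hjm] at this
      linarith [this]
  -- monotonicity
  have hM_anti : ∀ k, Mf (k + 1) ≤ Mf k := by
    intro k
    show Finset.univ.sup' Finset.univ_nonempty (r (k + 1)) ≤ Mf k
    apply Finset.sup'_le
    intro j _
    have := (hkey 1 k j 0 le_rfl (by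
      intro i
      simpa using mul_nonneg (hpow0 1 j i) (hy_pos k i).le)).1
    linarith [this]
  have hm_mono : ∀ k, mf k ≤ mf (k + 1) := by
    intro k
    show mf k ≤ Finset.univ.inf' Finset.univ_nonempty (r (k + 1))
    apply Finset.le_inf'
    intro j _
    have := (hkey 1 k j 0 le_rfl (by
      intro i
      simpa using mul_nonneg (hpow0 1 j i) (hy_pos k i).le)).2
    linarith [this]
  set d : ℕ → ℝ := fun k => Mf k - mf k with hd
  have hd0 : ∀ k, 0 ≤ d k := fun k => sub_nonneg.2 (hmM k)
  have hd_anti : Antitone d := antitone_nat_of_succ_le fun k => by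
    have := hM_anti k; have := hm_mono k; simp only [hd]; linarith
  -- positive lower bound on entries of P^m
  obtain ⟨p0, _, hp0⟩ := Finset.exists_mem_eq_inf'
    (Finset.univ_nonempty (α := V × V)) (fun p : V × V => (P ^ m) p.1 p.2)
  set δ : ℝ := Finset.univ.inf' (Finset.univ_nonempty (α := V × V))
    (fun p : V × V => (P ^ m) p.1 p.2) with hδ
  have hδpos : 0 < δ := by rw [hp0]; exact hmpos p0.1 p0.2
  have hδle : ∀ j i, δ ≤ (P ^ m) j i := fun j i =>
    Finset.inf'_le _ (Finset.mem_univ ((j, i) : V × V))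
  have hcard_pos : (0 : ℝ) < (Fintype.card V : ℝ) := by
    exact_mod_cast Fintype.card_pos
  -- bounds on y
  have hy_ub : ∀ (k : ℕ) (j : V), y k j ≤ (Fintype.card V : ℝ) := by
    intro k j
    rw [← hsumy k]
    exact Finset.single_le_sum (fun i _ => (hy_pos k i).le) (Finset.mem_univ j)
  have hy_lb : ∀ (s : ℕ) (i : V), δ * (Fintype.card V : ℝ) ≤ y (s + m) i := by
    intro s i
    rw [hstepy m s i]
    calc δ * (Fintype.card V : ℝ) = δ * ∑ l, y s l := by rw [hsumy s]
      _ = ∑ l, δ * y s l := by rw [Finset.mul_sum]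
      _ ≤ ∑ l, (P ^ m) i l * y s l :=
        Finset.sum_le_sum fun l _ => mul_le_mul_of_nonneg_right (hδle i l) (hy_pos s l).le
  -- contraction constant
  set c : ℝ := δ * δ with hc
  have hcpos : 0 < c := mul_pos hδpos hδpos
  have hcontract : ∀ s : ℕ, d (s + m + m) ≤ (1 - 2 * c) * d (s + m) := by
    intro s
    have hwb : ∀ j i, c * y (s + m + m) j ≤ (P ^ m) j i * y (s + m) i := by
      intro j i
      calc c * y (s + m + m) j ≤ c * (Fintype.card V : ℝ) :=
            mul_le_mul_of_nonneg_left (hy_ub _ j) hcpos.le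
        _ = δ * (δ * (Fintype.card V : ℝ)) := by rw [hc]; ring
        _ ≤ (P ^ m) j i * y (s + m) i :=
            mul_le_mul (hδle j i) (hy_lb s i) (by positivity) (hpow0 m j i)
    have hMb : Mf (s + m + m) ≤ Mf (s + m) - c * d (s + m) := by
      rw [hMf]
      apply Finset.sup'_le
      intro j _
      exact (hkey m (s + m) j c hcpos.le (hwb j)).1
    have hmb : mf (s + m) + c * d (s + m) ≤ mf (s + m + m) := by
      rw [hmf]
      apply Finset.le_inf'
      intro j _
      exact (hkey m (s + m) j c hcpos.le (hwb j)).2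
    simp only [hd] at *
    linarith
  set q : ℝ := max (1 - 2 * c) 0 with hq
  have hq0 : 0 ≤ q := le_max_right _ _
  have hq1 : q < 1 := by
    rw [hq]
    apply max_lt <;> linarith
  have hgeo : ∀ n : ℕ, d (m * (n + 1)) ≤ q ^ n * d m := by
    intro n
    induction n with
    | zero => simp
    | succ n ih =>
      have harith : m * (n + 1 + 1) = m * (n + 1) + m := by ring
      have harith2 : m * (n + 1) = (m * n) + m := by ring
      have h1 : d (m * (n + 1) + m) ≤ (1 - 2 * c) * d (m * (n + 1)) := by
        rw [harith2]
        have := hcontract (m * n)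
        convert this using 3 <;> ring
      have h2 : (1 - 2 * c) * d (m * (n + 1)) ≤ q * d (m * (n + 1)) :=
        mul_le_mul_of_nonneg_right (le_max_left _ _) (hd0 _)
      calc d (m * (n + 1 + 1)) = d (m * (n + 1) + m) := by rw [harith]
        _ ≤ q * d (m * (n + 1)) := le_trans h1 h2
        _ ≤ q * (q ^ n * d m) := mul_le_mul_of_nonneg_left ih hq0
        _ = q ^ (n + 1) * d m := by ring
  -- d tends to 0
  have hd_bdd : BddBelow (Set.range d) := ⟨0, fun z ⟨k, hk⟩ => hk ▸ hd0 k⟩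
  have hd_tendsto : Tendsto d atTop (nhds (⨅ k, d k)) :=
    tendsto_atTop_ciInf hd_anti hd_bdd
  have hφ : StrictMono (fun n : ℕ => m * (n + 1)) := by
    intro a b hab
    exact Nat.mul_lt_mul_of_le_of_lt (le_refl m) (by omega) (by omega)
  have hsub : Tendsto (fun n : ℕ => d (m * (n + 1))) atTop (nhds (⨅ k, d k)) :=
    hd_tendsto.comp hφ.tendsto_atTop
  have hsub0 : Tendsto (fun n : ℕ => d (m * (n + 1))) atTop (nhds 0) := by
    have hgeo_tendsto : Tendsto (fun n : ℕ => q ^ n * d m) atTop (nhds 0) := by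
      have := tendsto_pow_atTop_nhds_zero_of_lt_one hq0 hq1
      simpa using this.mul_const (d m)
    exact tendsto_of_tendsto_of_tendsto_of_le_of_le tendsto_const_nhds hgeo_tendsto
      (fun n => hd0 _) hgeo
  have hinf0 : (⨅ k, d k) = 0 := tendsto_nhds_unique hsub hsub0
  rw [hinf0] at hd_tendsto
  -- average is between mf and Mf
  set avg : ℝ := (∑ ℓ, x₀ ℓ) / (Fintype.card V : ℝ) with havg
  have havg_mem : ∀ k, mf k ≤ avg ∧ avg ≤ Mf k := by
    intro k
    have hs' : 0 < ∑ i, y k i := by rw [hsumy]; exact hcard_pos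
    have hxsum : ∑ i, y k i * r k i = ∑ ℓ, x₀ ℓ := by
      rw [← hsumx k]
      congr 1; ext i; exact (hxyr k i).symm
    have havg' : avg = (∑ i, y k i * r k i) / (∑ i, y k i) := by
      rw [havg, hxsum, hsumy]
    constructor
    · rw [havg']
      have := wavg_ge (y k) (r k) (fun i => (hy_pos k i).le) hs' (fun i => hrge k i)
        (Classical.arbitrary V) le_rfl (by simpa using (hy_pos k (Classical.arbitrary V)).le)
      simpa using this
    · rw [havg']
      have := wavg_le (y k) (r k) (fun i => (hy_pos k i).le) hs' (fun i => hrle k i)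
        (Classical.arbitrary V) le_rfl (by simpa using (hy_pos k (Classical.arbitrary V)).le)
      simpa using this
  -- final squeeze
  intro j
  have hlow : ∀ k, avg - d k ≤ r k j := by
    intro k
    have h1 := hrge k j
    have h2 := (havg_mem k).2
    simp only [hd] at *
    linarith
  have hhigh : ∀ k, r k j ≤ avg + d k := by
    intro k
    have h1 := hrle k j
    have h2 := (havg_mem k).1
    simp only [hd] at *
    linarith
  have hl : Tendsto (fun k => avg - d k) atTop (nhds avg) := by
    simpa using tendsto_const_nhds.sub hd_tendsto
  have hh : Tendsto (fun k => avg + d k) atTop (nhds avg) := by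
    simpa using tendsto_const_nhds.add hd_tendsto
  have main : Tendsto (fun k => r k j) atTop (nhds avg) :=
    tendsto_of_tendsto_of_tendsto_of_le_of_le hl hh hlow hhigh
  exact main
end

section
/- Let V be a nonempty finite set and let P be a V×V real matrix that is nonnegative, column stochastic (Σ_{j∈V} P(j,i) = 1 for every i), and primitive (there exists m ≥ 1 such that every entry of P^m is strictly positive). Let y₀ : V → ℝ and z₀ : V → ℝ with z₀(i) > 0 for every i. Then for every j ∈ V, the ratio (P^k y₀)_j / (P^k z₀)_j converges, as k → ∞, to (Σ_{ℓ∈V} y₀(ℓ)) / (Σ_{ℓ∈V} z₀(ℓ)). In particular, with y₀(j) = ℓ_j + u_j (local workload plus occupied utilization) and z₀(j) = π_j^max (local capacity), every node's ratio converges to (ρ + u_tot)/π^max, where ρ = Σ_j ℓ_j, u_tot = Σ_j u_j and π^max = Σ_j π_j^max. -/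
open Filter Matrix

section RatioConsensusAux

variable {V : Type*} [Fintype V] [DecidableEq V] [Nonempty V]

/-- ℓ¹ bound for multiplication by a nonnegative matrix with constant column sums. -/
private lemma l1_mulVec_le (Q : Matrix V V ℝ) (hQ : ∀ j i, 0 ≤ Q j i) (t : ℝ)
    (hc : ∀ i, ∑ j, Q j i = t) (v : V → ℝ) :
    ∑ j, |(Q *ᵥ v) j| ≤ t * ∑ i, |v i| := by
  have h1 : ∀ j, |(Q *ᵥ v) j| ≤ ∑ i, Q j i * |v i| := by
    intro j
    calc |(Q *ᵥ v) j| = |∑ i, Q j i * v i| := by simp [Matrix.mulVec, dotProduct]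
      _ ≤ ∑ i, |Q j i * v i| := Finset.abs_sum_le_sum_abs _ _
      _ = ∑ i, Q j i * |v i| := by
          refine Finset.sum_congr rfl fun i _ => ?_
          rw [abs_mul, abs_of_nonneg (hQ j i)]
  calc ∑ j, |(Q *ᵥ v) j| ≤ ∑ j, ∑ i, Q j i * |v i| :=
        Finset.sum_le_sum fun j _ => h1 j
    _ = ∑ i, (∑ j, Q j i) * |v i| := by
        rw [Finset.sum_comm]
        simp [Finset.sum_mul]
    _ = t * ∑ i, |v i| := by
        simp only [hc]
        rw [Finset.mul_sum]

private lemma pow_nonneg_entries (P : Matrix V V ℝ) (hnonneg : ∀ j i, 0 ≤ P j i) :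
    ∀ n j i, 0 ≤ (P ^ n) j i := by
  intro n
  induction n with
  | zero => intro j i; simp [Matrix.one_apply]; positivity
  | succ n ih =>
      intro j i
      rw [pow_succ, Matrix.mul_apply]
      exact Finset.sum_nonneg fun l _ => mul_nonneg (ih j l) (hnonneg l i)

private lemma pow_col_sum (P : Matrix V V ℝ) (hcol : ∀ i, ∑ j, P j i = 1) :
    ∀ n i, ∑ j, (P ^ n) j i = 1 := by
  intro n
  induction n with
  | zero => intro i; simp [Matrix.one_apply]
  | succ n ih =>
      intro i
      rw [pow_succ']
      calc ∑ j, (P * P ^ n) j i = ∑ j, ∑ l, P j l * (P ^ n) l i := by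
            simp [Matrix.mul_apply]
        _ = ∑ l, (∑ j, P j l) * (P ^ n) l i := by
            rw [Finset.sum_comm]; simp [Finset.sum_mul]
        _ = ∑ l, (P ^ n) l i := by simp [hcol]
        _ = 1 := ih i

private lemma pow_sum_pres (P : Matrix V V ℝ) (hcol : ∀ i, ∑ j, P j i = 1)
    (n : ℕ) (v : V → ℝ) : ∑ j, ((P ^ n) *ᵥ v) j = ∑ i, v i := by
  calc ∑ j, ((P ^ n) *ᵥ v) j = ∑ j, ∑ i, (P ^ n) j i * v i := by
        simp [Matrix.mulVec, dotProduct]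
    _ = ∑ i, (∑ j, (P ^ n) j i) * v i := by
        rw [Finset.sum_comm]; simp [Finset.sum_mul]
    _ = ∑ i, v i := by simp [pow_col_sum P hcol]

private lemma nat_div_tendsto (m : ℕ) (hm : 0 < m) :
    Tendsto (fun k : ℕ => k / m) atTop atTop := by
  refine tendsto_atTop_atTop.2 fun b => ⟨m * b, fun k hk => ?_⟩
  exact (Nat.le_div_iff_mul_le hm).2 (by rw [mul_comm] at hk; omega)

end RatioConsensusAux

/-- Ratio consensus with general positive denominator initialization:
for a primitive column-stochastic matrix `P` and `z₀ > 0` entrywise,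
`(P^k y₀)_j / (P^k z₀)_j → (∑ y₀) / (∑ z₀)` for every node `j`.
In particular, with `y₀ j = ℓ j + u j` and `z₀ j = π_j^max`, every node's
ratio converges to `(ρ + u_tot)/π^max`. -/
theorem ratio_consensus_general
    {V : Type*} [Fintype V] [DecidableEq V] [Nonempty V]
    (P : Matrix V V ℝ)
    (hnonneg : ∀ j i, 0 ≤ P j i)
    (hcol : ∀ i, ∑ j, P j i = 1)
    (hprim : ∃ m : ℕ, 1 ≤ m ∧ ∀ j i, 0 < (P ^ m) j i)
    (y₀ z₀ : V → ℝ) (hz₀ : ∀ i, 0 < z₀ i) :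
    (∀ j : V,
      Tendsto (fun k : ℕ => ((P ^ k) *ᵥ y₀) j / ((P ^ k) *ᵥ z₀) j)
        atTop (nhds ((∑ ℓ, y₀ ℓ) / (∑ ℓ, z₀ ℓ)))) ∧
    (∀ (ℓ u πmax : V → ℝ), (∀ j, 0 < πmax j) →
      y₀ = (fun j => ℓ j + u j) → z₀ = πmax →
      ∀ j : V,
        Tendsto (fun k : ℕ => ((P ^ k) *ᵥ y₀) j / ((P ^ k) *ᵥ z₀) j)
          atTop (nhds (((∑ i, ℓ i) + (∑ i, u i)) / (∑ i, πmax i)))) := by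
  obtain ⟨m, hm, hpos⟩ := hprim
  have hm0 : 0 < m := hm
  -- the minimal entry of P^m
  have huniv : (Finset.univ : Finset (V × V)).Nonempty := Finset.univ_nonempty
  set ε : ℝ := Finset.univ.inf' huniv (fun p : V × V => (P ^ m) p.1 p.2) with hε_def
  have hε_pos : 0 < ε := by
    rw [hε_def]
    exact (Finset.lt_inf'_iff huniv).2 fun p _ => hpos p.1 p.2
  have hε_le : ∀ j i, ε ≤ (P ^ m) j i := fun j i =>
    Finset.inf'_le _ (Finset.mem_univ (⟨j, i⟩ : V × V))
  set n : ℕ := Fintype.card V with hn_def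
  have hn_pos : 0 < n := Fintype.card_pos
  set c : ℝ := (n : ℝ) * ε with hc_def
  have hc_pos : 0 < c := mul_pos (by exact_mod_cast hn_pos) hε_pos
  have hc_le : c ≤ 1 := by
    obtain ⟨i⟩ := ‹Nonempty V›
    have : (n : ℝ) * ε ≤ ∑ j, (P ^ m) j i := by
      calc (n : ℝ) * ε = ∑ _j : V, ε := by simp [hn_def, mul_comm]
        _ ≤ ∑ j, (P ^ m) j i := Finset.sum_le_sum fun j _ => hε_le j i
    rw [pow_col_sum P hcol m i] at this
    exact this
  -- ℓ¹ norm abbreviation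
  set N : (V → ℝ) → ℝ := fun v => ∑ j, |v j| with hN_def
  have hN_nonneg : ∀ v, 0 ≤ N v := fun v =>
    Finset.sum_nonneg fun j _ => abs_nonneg _
  -- contraction on sum-zero vectors over one m-block
  have hcontract : ∀ v : V → ℝ, (∑ i, v i) = 0 →
      N ((P ^ m) *ᵥ v) ≤ (1 - c) * N v := by
    intro v hv
    set B : Matrix V V ℝ := fun j i => (P ^ m) j i - ε with hB_def
    have hBv : (P ^ m) *ᵥ v = B *ᵥ v := by
      funext j
      simp only [Matrix.mulVec, dotProduct, hB_def, sub_mul]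
      rw [Finset.sum_sub_distrib, ← Finset.mul_sum, hv]
      ring
    rw [hBv]
    refine l1_mulVec_le B (fun j i => sub_nonneg.2 (hε_le j i)) (1 - c)
      (fun i => ?_) v
    simp only [hB_def]
    rw [Finset.sum_sub_distrib, pow_col_sum P hcol m i]
    simp [hc_def, hn_def, mul_comm]
  -- N is non-increasing along iterations
  have hstep : ∀ (k : ℕ) (v : V → ℝ), N ((P ^ (k + 1)) *ᵥ v) ≤ N ((P ^ k) *ᵥ v) := by
    intro k v
    have : (P ^ (k + 1)) *ᵥ v = P *ᵥ ((P ^ k) *ᵥ v) := by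
      rw [Matrix.mulVec_mulVec, ← pow_succ']
    rw [this]
    simpa using l1_mulVec_le P hnonneg 1 hcol ((P ^ k) *ᵥ v)
  have hanti : ∀ (v : V → ℝ), Antitone fun k => N ((P ^ k) *ᵥ v) := by
    intro v
    exact antitone_nat_of_succ_le fun k => hstep k v
  -- geometric decay along multiples of m, for sum-zero w
  have hgeo : ∀ (w : V → ℝ), (∑ i, w i) = 0 →
      ∀ q : ℕ, N ((P ^ (m * q)) *ᵥ w) ≤ (1 - c) ^ q * N w := by
    intro w hw q
    induction q with
    | zero => simp
    | succ q ih =>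
        have hsz : ∑ i, ((P ^ (m * q)) *ᵥ w) i = 0 := by
          rw [pow_sum_pres P hcol, hw]
        have hsplit : (P ^ (m * (q + 1))) *ᵥ w = (P ^ m) *ᵥ ((P ^ (m * q)) *ᵥ w) := by
          rw [Matrix.mulVec_mulVec, ← pow_add]
          ring_nf
        rw [hsplit]
        calc N ((P ^ m) *ᵥ ((P ^ (m * q)) *ᵥ w))
            ≤ (1 - c) * N ((P ^ (m * q)) *ᵥ w) := hcontract _ hsz
          _ ≤ (1 - c) * ((1 - c) ^ q * N w) :=
              mul_le_mul_of_nonneg_left ih (by linarith)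
          _ = (1 - c) ^ (q + 1) * N w := by ring
  -- N (P^k w) → 0 for sum-zero w
  have hNtendsto : ∀ (w : V → ℝ), (∑ i, w i) = 0 →
      Tendsto (fun k : ℕ => N ((P ^ k) *ᵥ w)) atTop (nhds 0) := by
    intro w hw
    have hbound : ∀ k : ℕ, N ((P ^ k) *ᵥ w) ≤ (1 - c) ^ (k / m) * N w := by
      intro k
      have h1 : m * (k / m) ≤ k := Nat.mul_div_le k m
      exact le_trans (hanti w h1) (hgeo w hw (k / m))
    have hrhs : Tendsto (fun k : ℕ => (1 - c) ^ (k / m) * N w) atTop (nhds 0) := by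
      have h1 : Tendsto (fun q : ℕ => (1 - c) ^ q) atTop (nhds 0) :=
        tendsto_pow_atTop_nhds_zero_of_lt_one (by linarith) (by linarith)
      have := (h1.comp (nat_div_tendsto m hm0)).mul_const (N w)
      simpa using this
    exact squeeze_zero (fun k => hN_nonneg _) hbound hrhs
  -- uniform lower bound on denominators
  have hSz : 0 < ∑ i, z₀ i := Finset.sum_pos (fun i _ => hz₀ i) Finset.univ_nonempty
  have hdenom : ∀ k : ℕ, m ≤ k → ∀ j, ε * (∑ i, z₀ i) ≤ ((P ^ k) *ᵥ z₀) j := by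
    intro k hk j
    obtain ⟨r, rfl⟩ : ∃ r, k = m + r := ⟨k - m, by omega⟩
    have hz_r : ∀ i, 0 ≤ ((P ^ r) *ᵥ z₀) i := by
      intro i
      simp only [Matrix.mulVec, dotProduct]
      exact Finset.sum_nonneg fun l _ =>
        mul_nonneg (pow_nonneg_entries P hnonneg r i l) (hz₀ l).le
    calc ε * ∑ i, z₀ i = ε * ∑ i, ((P ^ r) *ᵥ z₀) i := by
          rw [pow_sum_pres P hcol]
      _ = ∑ i, ε * ((P ^ r) *ᵥ z₀) i := Finset.mul_sum _ _ _
      _ ≤ ∑ i, (P ^ m) j i * ((P ^ r) *ᵥ z₀) i :=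
          Finset.sum_le_sum fun i _ =>
            mul_le_mul_of_nonneg_right (hε_le j i) (hz_r i)
      _ = ((P ^ (m + r)) *ᵥ z₀) j := by
          rw [pow_add, ← Matrix.mulVec_mulVec]
          simp [Matrix.mulVec, dotProduct]
  -- the main convergence claim
  have main : ∀ j : V,
      Tendsto (fun k : ℕ => ((P ^ k) *ᵥ y₀) j / ((P ^ k) *ᵥ z₀) j)
        atTop (nhds ((∑ ℓ, y₀ ℓ) / (∑ ℓ, z₀ ℓ))) := by
    intro j
    set ρ : ℝ := (∑ ℓ, y₀ ℓ) / (∑ ℓ, z₀ ℓ) with hρ_def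
    set w : V → ℝ := fun i => y₀ i - ρ * z₀ i with hw_def
    have hw : ∑ i, w i = 0 := by
      simp only [hw_def]
      rw [Finset.sum_sub_distrib, ← Finset.mul_sum, hρ_def,
        div_mul_cancel₀ _ (ne_of_gt hSz), sub_self]
    have hyw : ∀ (k : ℕ) (j' : V),
        ((P ^ k) *ᵥ y₀) j' = ((P ^ k) *ᵥ w) j' + ρ * ((P ^ k) *ᵥ z₀) j' := by
      intro k j'
      have hy : y₀ = w + ρ • z₀ := by
        funext i
        simp [hw_def]
      rw [hy, Matrix.mulVec_add, Matrix.mulVec_smul]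
      simp
    have h0 : Tendsto (fun k : ℕ => ((P ^ k) *ᵥ w) j / ((P ^ k) *ᵥ z₀) j)
        atTop (nhds 0) := by
      have hrhs : Tendsto (fun k : ℕ => N ((P ^ k) *ᵥ w) / (ε * ∑ i, z₀ i))
          atTop (nhds 0) := by
        have := (hNtendsto w hw).div_const (ε * ∑ i, z₀ i)
        simpa using this
      refine squeeze_zero_norm' ?_ hrhs
      filter_upwards [eventually_ge_atTop m] with k hk
      have hd := hdenom k hk j
      have hd_pos : (0 : ℝ) < ((P ^ k) *ᵥ z₀) j :=
        lt_of_lt_of_le (mul_pos hε_pos hSz) hd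
      rw [Real.norm_eq_abs, abs_div, abs_of_pos hd_pos]
      refine div_le_div₀ (hN_nonneg _) ?_ (mul_pos hε_pos hSz) hd
      exact Finset.single_le_sum (f := fun i => |((P ^ k) *ᵥ w) i|)
        (fun i _ => abs_nonneg _) (Finset.mem_univ j)
    have hfinal : Tendsto (fun k : ℕ => ρ + ((P ^ k) *ᵥ w) j / ((P ^ k) *ᵥ z₀) j)
        atTop (nhds ρ) := by
      have := (tendsto_const_nhds (x := ρ) (f := atTop)).add h0
      simpa using this
    refine hfinal.congr' ?_
    filter_upwards [eventually_ge_atTop m] with k hk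
    have hd := hdenom k hk j
    have hd_ne : ((P ^ k) *ᵥ z₀) j ≠ 0 :=
      ne_of_gt (lt_of_lt_of_le (mul_pos hε_pos hSz) hd)
    rw [hyw k j, add_div, mul_div_assoc, div_self hd_ne, mul_one, add_comm]
  refine ⟨main, ?_⟩
  intro ℓ u πmax hπ hy hz j
  have h := main j
  subst hy hz
  have hsum : ∑ i, (ℓ i + u i) = (∑ i, ℓ i) + ∑ i, u i := Finset.sum_add_distrib
  simpa [hsum] using h
end

section
/- Let V be a nonempty finite set and let adj : V → V → Prop describe a directed communication graph, where adj(j,i) means node j receives information from node i (i is an in-neighbor of j). Let D ∈ ℕ and assume that for all i, j ∈ V there exist m ≤ D and a sequence v₀ = i, v₁, …, v_m = j with adj(v_{t+1}, v_t) for every t < m (every node is reachable from every other within D hops). Let x : ℕ → V → ℝ satisfy the synchronous max-consensus update x(k+1)(j) = max over the set {x(k)(j)} ∪ {x(k)(i) : adj(j,i)} for every k and j. Then for every k ≥ D and every j ∈ V, x(k)(j) = max_{i∈V} x(0)(i). -/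
/-- Synchronous max-consensus: if every node is reachable from every other
node within `D` hops, and every node updates its state to the maximum of its
own state and its in-neighbors' states, then after at most `D` steps every
node holds the maximum of the initial values. -/
theorem sync_max_consensus
    {V : Type*} [Fintype V] [Nonempty V]
    (adj : V → V → Prop) [DecidableRel adj] (D : ℕ)
    (hconn : ∀ i j : V, ∃ m ≤ D, ∃ v : ℕ → V,
      v 0 = i ∧ v m = j ∧ ∀ t < m, adj (v (t + 1)) (v t))
    (x : ℕ → V → ℝ)
    (hupd : ∀ k (j : V), x (k + 1) j =
      (insert (x k j) ((Finset.univ.filter (fun i => adj j i)).image (x k))).max'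
        (Finset.insert_nonempty _ _)) :
    ∀ k, D ≤ k → ∀ j : V, x k j = Finset.univ.sup' Finset.univ_nonempty (x 0) := by
  set M := Finset.univ.sup' Finset.univ_nonempty (x 0) with hM
  -- self-monotonicity
  have hself : ∀ k (j : V), x k j ≤ x (k + 1) j := by
    intro k j
    rw [hupd k j]
    exact Finset.le_max' _ _ (Finset.mem_insert_self _ _)
  have hmono : ∀ k k' (j : V), k ≤ k' → x k j ≤ x k' j := by
    intro k k' j h
    induction k' with
    | zero => simp_all
    | succ n ih =>
      rcases Nat.lt_or_ge k (n+1) with h' | h'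
      · exact le_trans (ih (Nat.lt_succ_iff.mp h')) (hself n j)
      · have : k = n + 1 := le_antisymm h h'
        simp [this]
  have hadj : ∀ k (i j : V), adj j i → x k i ≤ x (k + 1) j := by
    intro k i j h
    rw [hupd k j]
    apply Finset.le_max'
    apply Finset.mem_insert_of_mem
    exact Finset.mem_image_of_mem _ (by simp [h])
  -- upper bound
  have hub : ∀ k (j : V), x k j ≤ M := by
    intro k
    induction k with
    | zero => intro j; exact Finset.le_sup' _ (Finset.mem_univ j)
    | succ n ih =>
      intro j
      rw [hupd n j]
      apply Finset.max'_le
      intro y hy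
      rcases Finset.mem_insert.mp hy with h | h
      · exact h ▸ ih j
      · obtain ⟨i, -, rfl⟩ := Finset.mem_image.mp h
        exact ih i
  -- lower bound
  obtain ⟨i0, -, hi0⟩ := Finset.exists_mem_eq_sup' (Finset.univ_nonempty (α := V)) (x 0)
  intro k hk j
  refine le_antisymm (hub k j) ?_
  obtain ⟨m, hmD, v, hv0, hvm, hstep⟩ := hconn i0 j
  have key : ∀ t ≤ m, M ≤ x t (v t) := by
    intro t ht
    induction t with
    | zero => rw [hv0, ← hi0]
    | succ n ih =>
      exact le_trans (ih (Nat.le_of_succ_le ht)) (hadj n _ _ (hstep n ht))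
  calc M ≤ x m (v m) := key m le_rfl
    _ = x m j := by rw [hvm]
    _ ≤ x k j := hmono m k j (le_trans hmD hk)
end

section
/- Let V be a nonempty finite set and let adj : V → V → Prop describe a directed communication graph, where adj(j,i) means node j receives information from node i. Let D ∈ ℕ and assume that for all i, j ∈ V there exist m ≤ D and a sequence v₀ = i, …, v_m = j with adj(v_{t+1}, v_t) for every t < m. Let τ̄ ∈ ℕ and let τ : V → V → ℕ → ℕ be delay functions with τ(j,i,k) ≤ min(τ̄, k) for all j, i, k. Let x : ℕ → V → ℝ satisfy the asynchronous max-consensus update x(k+1)(j) = max over {x(k)(j)} ∪ {x(k − τ(j,i,k))(i) : adj(j,i)} for every k and j. Then for every k ≥ (1+τ̄)·D and every j ∈ V, x(k)(j) = max_{i∈V} x(0)(i). -/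
/-- Asynchronous max-consensus with bounded time-varying delays: if every node
is reachable from every other node within `D` hops, delays are bounded by `τ̄`,
and every node updates its state to the maximum of its own state and possibly
outdated in-neighbor states, then after at most `(1+τ̄)·D` steps every node
holds the maximum of the initial values. -/
theorem async_max_consensus
    {V : Type*} [Fintype V] [Nonempty V]
    (adj : V → V → Prop) [DecidableRel adj] (D : ℕ)
    (hconn : ∀ i j : V, ∃ m ≤ D, ∃ v : ℕ → V,
      v 0 = i ∧ v m = j ∧ ∀ t < m, adj (v (t + 1)) (v t))
    (τbar : ℕ) (τ : V → V → ℕ → ℕ)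
    (hτ : ∀ (j i : V) (k : ℕ), τ j i k ≤ min τbar k)
    (x : ℕ → V → ℝ)
    (hupd : ∀ k (j : V), x (k + 1) j =
      (insert (x k j)
        ((Finset.univ.filter (fun i => adj j i)).image
          (fun i => x (k - τ j i k) i))).max'
        (Finset.insert_nonempty _ _)) :
    ∀ k, (1 + τbar) * D ≤ k → ∀ j : V,
      x k j = Finset.univ.sup' Finset.univ_nonempty (x 0) := by
  set M := Finset.univ.sup' Finset.univ_nonempty (x 0) with hM
  -- upper bound
  have ub : ∀ k (j : V), x k j ≤ M := by
    intro k
    induction k using Nat.strong_induction_on with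
    | _ k ih =>
      intro j
      match k with
      | 0 => exact Finset.le_sup' _ (Finset.mem_univ j)
      | k + 1 =>
        rw [hupd]
        apply Finset.max'_le
        intro y hy
        rcases Finset.mem_insert.mp hy with h | h
        · exact h ▸ ih k (Nat.lt_succ_self k) j
        · rcases Finset.mem_image.mp h with ⟨i, _, rfl⟩
          exact ih (k - τ j i k) (Nat.lt_succ_of_le (Nat.sub_le _ _)) i
  -- one-step monotonicity
  have mono1 : ∀ k (j : V), x k j ≤ x (k + 1) j := by
    intro k j
    rw [hupd]
    exact Finset.le_max' _ _ (Finset.mem_insert_self _ _)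
  have mono : ∀ (j : V) k k', k ≤ k' → x k j ≤ x k' j := by
    intro j k k' h
    exact monotone_nat_of_le_succ (fun n => mono1 n j) h
  -- propagation
  have prop : ∀ k (i j : V), adj j i → x k i ≤ x (k + τbar + 1) j := by
    intro k i j hadj
    rw [hupd]
    refine le_trans ?_ (Finset.le_max' _ (x (k + τbar - τ j i (k + τbar)) i) ?_)
    · apply mono
      have := (hτ j i (k + τbar)).trans (min_le_left _ _)
      omega
    · exact Finset.mem_insert_of_mem (Finset.mem_image.mpr
        ⟨i, Finset.mem_filter.mpr ⟨Finset.mem_univ i, hadj⟩, rfl⟩)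
  -- pick a maximizer
  obtain ⟨i₀, _, hi₀⟩ := Finset.exists_mem_eq_sup' (Finset.univ_nonempty (α := V)) (x 0)
  intro k hk j
  refine le_antisymm (ub k j) ?_
  obtain ⟨m, hm, v, hv0, hvm, hadj⟩ := hconn i₀ j
  have key : ∀ t ≤ m, M ≤ x ((1 + τbar) * t) (v t) := by
    intro t
    induction t with
    | zero => intro _; rw [Nat.mul_zero, hv0, hM, hi₀]
    | succ t iht =>
      intro ht
      have h1 : M ≤ x ((1 + τbar) * t) (v t) := iht (by omega)
      have h2 := prop ((1 + τbar) * t) (v t) (v (t + 1)) (hadj t (by omega))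
      have he : (1 + τbar) * (t + 1) = (1 + τbar) * t + τbar + 1 := by ring
      rw [he]
      exact h1.trans h2
  calc M ≤ x ((1 + τbar) * m) (v m) := key m le_rfl
    _ ≤ x k (v m) := mono _ _ _ (le_trans (Nat.mul_le_mul_left _ hm) hk)
    _ = x k j := by rw [hvm]
end

section
/- Let V be a nonempty finite set and let P be a V×V real matrix that is nonnegative, column stochastic (Σ_{j∈V} P(j,i) = 1 for every i), primitive (some power P^m has all entries strictly positive), and with strictly positive diagonal (P(j,j) > 0 for all j). Let τ̄ ∈ ℕ and let τ : V → V → ℕ → ℕ be delay functions with τ(j,i,m) ≤ τ̄ for all j, i, m. Define y : ℕ → V → ℝ by the delayed iteration y(k+1)(j) = P(j,j)·y(k)(j) + Σ_{i≠j} P(j,i) · ( Σ_{m ≤ k, m + τ(j,i,m) = k} y(m)(i) ), with initial condition y(0) = y₀ : V → ℝ, and define z : ℕ → V → ℝ by the same delayed iteration with the same delays and initial condition z(0) = 𝟙 (all ones). Then for every j ∈ V, the ratio y(k)(j) / z(k)(j) converges, as k → ∞, to (Σ_{ℓ∈V} y₀(ℓ)) / |V|. -/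
set_option linter.unusedSectionVars false
open Filter Matrix Finset
namespace RRC
variable {V : Type*} [Fintype V] [DecidableEq V]
variable (P : Matrix V V ℝ) (τbar : ℕ) (τ : V → V → ℕ → ℕ)

def A (k : ℕ) : Matrix (V ⊕ V × Fin (τbar+1)) (V ⊕ V × Fin (τbar+1)) ℝ :=
  fun p q =>
    match p, q with
    | .inl j, .inl i => if i = j then P j j else if τ j i k = 0 then P j i else 0
    | .inl j, .inr (i, d) => if i = j ∧ (d : ℕ) = 0 then 1 else 0
    | .inr (j, d), .inl i => if i ≠ j ∧ τ j i k = (d : ℕ) + 1 then P j i else 0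
    | .inr (j, d), .inr (i, e) => if i = j ∧ (e : ℕ) = (d : ℕ) + 1 then 1 else 0

lemma A_ll (k : ℕ) (j i : V) :
    A P τbar τ k (.inl j) (.inl i) = if i = j then P j j else if τ j i k = 0 then P j i else 0 := rfl
lemma A_lr (k : ℕ) (j i : V) (d : Fin (τbar+1)) :
    A P τbar τ k (.inl j) (.inr (i, d)) = if i = j ∧ (d : ℕ) = 0 then 1 else 0 := rfl
lemma A_rl (k : ℕ) (j i : V) (d : Fin (τbar+1)) :
    A P τbar τ k (.inr (j, d)) (.inl i) = if i ≠ j ∧ τ j i k = (d : ℕ) + 1 then P j i else 0 := rfl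
lemma A_rr (k : ℕ) (j i : V) (d e : Fin (τbar+1)) :
    A P τbar τ k (.inr (j, d)) (.inr (i, e)) = if i = j ∧ (e : ℕ) = (d : ℕ) + 1 then 1 else 0 := rfl

lemma A_nonneg (hnonneg : ∀ j i, 0 ≤ P j i) (k : ℕ) (p q : V ⊕ V × Fin (τbar+1)) :
    0 ≤ A P τbar τ k p q := by
  rcases p with j | ⟨j, d⟩ <;> rcases q with i | ⟨i, e⟩ <;>
    simp only [A_ll, A_lr, A_rl, A_rr] <;> split_ifs <;>
    first | exact hnonneg _ _ | norm_num

lemma A_colsum (hcol : ∀ i, ∑ j, P j i = 1) (hτ : ∀ j i m, τ j i m ≤ τbar)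
    (k : ℕ) (q : V ⊕ V × Fin (τbar+1)) :
    ∑ p, A P τbar τ k p q = 1 := by
  rw [Fintype.sum_sum_type]
  rcases q with i | ⟨i, e⟩
  · rw [Fintype.sum_prod_type]
    have key : ∀ j : V,
        A P τbar τ k (.inl j) (.inl i) + ∑ d : Fin (τbar+1), A P τbar τ k (.inr (j,d)) (.inl i)
          = P j i := by
      intro j
      simp only [A_ll, A_rl]
      by_cases hij : i = j
      · subst hij
        simp
      · rw [if_neg hij]
        rcases h0 : τ j i k with _ | e
        · rw [if_pos rfl]
          have : ∀ d : Fin (τbar+1), (if i ≠ j ∧ τ j i k = (d:ℕ)+1 then P j i else 0) = 0 := by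
            intro d; rw [if_neg]; rintro ⟨-, h⟩; omega
          simp [this]
        · rw [if_neg (by omega)]
          have he : e < τbar + 1 := by have := hτ j i k; omega
          rw [Finset.sum_eq_single ⟨e, he⟩]
          · rw [if_pos ⟨hij, by simp [h0]⟩, zero_add]
          · intro d _ hd
            rw [if_neg]
            rintro ⟨-, h⟩
            exact hd (Fin.ext (show (d:ℕ) = e by omega))
          · simp
      done
    rw [← Finset.sum_add_distrib]
    · simp only [key]
      exact hcol i
  · rcases he : (e : ℕ) with _ | e'
    · -- arrives next step at real node i
      have h1 : ∑ j : V, A P τbar τ k (.inl j) (.inr (i,e)) = 1 := by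
        rw [Finset.sum_eq_single i]
        · rw [A_lr, if_pos ⟨rfl, he⟩]
        · intro j _ hj; rw [A_lr, if_neg (by rintro ⟨h, -⟩; exact hj h.symm)]
        · simp
      have h2 : ∀ p : V × Fin (τbar+1), A P τbar τ k (.inr p) (.inr (i,e)) = 0 := by
        rintro ⟨j, d⟩; rw [A_rr, if_neg (by rintro ⟨-, h⟩; omega)]
      simp [h1, h2]
    · have h1 : ∀ j : V, A P τbar τ k (.inl j) (.inr (i,e)) = 0 := by
        intro j; rw [A_lr, if_neg (by rintro ⟨-, h⟩; omega)]
      have he' : e' < τbar + 1 := by have := e.isLt; omega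
      have h2 : ∑ p : V × Fin (τbar+1), A P τbar τ k (.inr p) (.inr (i,e)) = 1 := by
        rw [Finset.sum_eq_single (i, (⟨e', he'⟩ : Fin (τbar+1)))]
        · rw [A_rr, if_pos ⟨rfl, by simp [he]⟩]
        · rintro ⟨j, d⟩ _ hd
          rw [A_rr, if_neg]
          rintro ⟨h1', h2'⟩
          exact hd (by simp only [h1']; exact Prod.ext rfl (Fin.ext (by simp; omega)))
        · simp
      simp [h1, h2]

/-- transfer matrix over the window `[s, s+n)` -/
def W (s : ℕ) : ℕ → Matrix (V ⊕ V × Fin (τbar+1)) (V ⊕ V × Fin (τbar+1)) ℝ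
  | 0 => 1
  | n+1 => A P τbar τ (s+n) * W s n

lemma W_nonneg (hnonneg : ∀ j i, 0 ≤ P j i) (s n : ℕ) (p q : V ⊕ V × Fin (τbar+1)) :
    0 ≤ W P τbar τ s n p q := by
  induction n generalizing p q with
  | zero => by_cases h : p = q <;> simp [W, Matrix.one_apply, h]
  | succ n ih =>
    rw [W, Matrix.mul_apply]
    exact Finset.sum_nonneg fun r _ => mul_nonneg (A_nonneg P τbar τ hnonneg _ _ _) (ih _ _)

lemma W_colsum (hcol : ∀ i, ∑ j, P j i = 1) (hτ : ∀ j i m, τ j i m ≤ τbar)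
    (s n : ℕ) (q : V ⊕ V × Fin (τbar+1)) :
    ∑ p, W P τbar τ s n p q = 1 := by
  induction n generalizing q with
  | zero => simp [W, Matrix.one_apply, Finset.sum_ite_eq]
  | succ n ih =>
    simp only [W, Matrix.mul_apply]
    rw [Finset.sum_comm]
    have : ∀ r, ∑ p, A P τbar τ (s+n) p r * W P τbar τ s n r q
        = W P τbar τ s n r q := by
      intro r
      rw [← Finset.sum_mul, A_colsum P τbar τ hcol hτ, one_mul]
    simp only [this]
    exact ih q

lemma W_add (s m n : ℕ) :
    W P τbar τ s (m + n) = W P τbar τ (s + m) n * W P τbar τ s m := by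
  induction n with
  | zero => simp [W]
  | succ n ih =>
    rw [show m + (n + 1) = (m + n) + 1 from rfl, W, ih, ← Matrix.mul_assoc,
      show s + (m + n) = (s + m) + n from by omega]
    rfl

/-- entrywise lower bound through a product of nonnegative matrices -/
lemma mul_entry_le {α : Type*} [Fintype α] {M N : Matrix α α ℝ}
    (hM : ∀ p q, 0 ≤ M p q) (hN : ∀ p q, 0 ≤ N p q) (p r q : α) :
    M p r * N r q ≤ (M * N) p q := by
  rw [Matrix.mul_apply]
  exact Finset.single_le_sum (f := fun r' => M p r' * N r' q)
    (fun r' _ => mul_nonneg (hM _ _) (hN _ _)) (Finset.mem_univ r)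

lemma W_one (t : ℕ) : W P τbar τ t 1 = A P τbar τ t := by
  show A P τbar τ (t+0) * W P τbar τ t 0 = _
  simp [W]

section LB

variable {P} {τbar} {τ} {a : ℝ}
variable (hnonneg : ∀ j i, 0 ≤ P j i) (hτ : ∀ j i m, τ j i m ≤ τbar)
  (hdiag : ∀ j, 0 < P j j) (ha0 : 0 ≤ a) (ha1 : a ≤ 1)
  (haP : ∀ j i, 0 < P j i → a ≤ P j i)

include hnonneg ha0 haP hdiag in
lemma W_diag_lb (t s : ℕ) (j : V) : a ^ s ≤ W P τbar τ t s (.inl j) (.inl j) := by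
  induction s with
  | zero => simp [W, Matrix.one_apply]
  | succ s ih =>
    rw [W]
    calc a ^ (s+1) = a * a ^ s := by ring
    _ ≤ A P τbar τ (t+s) (.inl j) (.inl j) * W P τbar τ t s (.inl j) (.inl j) := by
        apply mul_le_mul _ ih (pow_nonneg ha0 _)
          (A_nonneg P τbar τ hnonneg _ _ _)
        rw [A_ll, if_pos rfl]
        exact haP _ _ (hdiag j)
    _ ≤ _ := mul_entry_le (A_nonneg P τbar τ hnonneg _) (W_nonneg P τbar τ hnonneg _ _) _ _ _

include hnonneg in
lemma W_drain_lb (j : V) : ∀ (e : ℕ) (he : e < τbar + 1) (t : ℕ),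
    (1:ℝ) ≤ W P τbar τ t (e+1) (.inl j) (.inr (j, ⟨e, he⟩)) := by
  intro e
  induction e with
  | zero =>
    intro he t
    rw [W_one, A_lr, if_pos ⟨rfl, rfl⟩]
  | succ e ih =>
    intro he t
    have he' : e < τbar + 1 := by omega
    have hW : W P τbar τ t (e+1+1) = W P τbar τ (t+1) (e+1) * W P τbar τ t 1 := by
      have h := W_add P τbar τ t 1 (e+1)
      rwa [show 1+(e+1) = e+1+1 from by omega] at h
    rw [hW]
    have h1 : (1:ℝ) ≤ W P τbar τ (t+1) (e+1) (.inl j) (.inr (j, ⟨e, he'⟩)) := ih he' (t+1)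
    have h2 : W P τbar τ t 1 (.inr (j, ⟨e, he'⟩)) (.inr (j, ⟨e+1, he⟩)) = 1 := by
      rw [W_one, A_rr, if_pos ⟨rfl, rfl⟩]
    calc (1:ℝ) = 1 * 1 := by ring
    _ ≤ W P τbar τ (t+1) (e+1) (.inl j) (.inr (j, ⟨e, he'⟩))
        * W P τbar τ t 1 (.inr (j, ⟨e, he'⟩)) (.inr (j, ⟨e+1, he⟩)) := by
        rw [h2]
        exact mul_le_mul h1 le_rfl zero_le_one (le_trans zero_le_one h1)
    _ ≤ _ := mul_entry_le (W_nonneg P τbar τ hnonneg _ _) (W_nonneg P τbar τ hnonneg _ _) _ _ _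

include hnonneg hτ in
lemma W_hop_raw {j i : V} (hij : i ≠ j) (hP : 0 < P j i) (t : ℕ) :
    P j i ≤ W P τbar τ t (τ j i t + 1) (.inl j) (.inl i) := by
  rcases h0 : τ j i t with _ | e
  · rw [show (0:ℕ)+1 = 1 from rfl, W_one, A_ll, if_neg hij, if_pos h0]
  · have he : e < τbar + 1 := by have := hτ j i t; omega
    have hW : W P τbar τ t (e+1+1) = W P τbar τ (t+1) (e+1) * W P τbar τ t 1 := by
      have h := W_add P τbar τ t 1 (e+1)
      rwa [show 1+(e+1) = e+1+1 from by omega] at h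
    rw [hW]
    have h1 : (1:ℝ) ≤ W P τbar τ (t+1) (e+1) (.inl j) (.inr (j, ⟨e, he⟩)) :=
      W_drain_lb hnonneg j e he (t+1)
    have h2 : W P τbar τ t 1 (.inr (j, ⟨e, he⟩)) (.inl i) = P j i := by
      rw [W_one, A_rl, if_pos ⟨hij, h0⟩]
    calc P j i = 1 * P j i := (one_mul _).symm
    _ ≤ W P τbar τ (t+1) (e+1) (.inl j) (.inr (j, ⟨e, he⟩))
        * W P τbar τ t 1 (.inr (j, ⟨e, he⟩)) (.inl i) := by
        rw [h2]
        exact mul_le_mul h1 le_rfl (le_of_lt hP) (le_trans zero_le_one h1)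
    _ ≤ _ := mul_entry_le (W_nonneg P τbar τ hnonneg _ _) (W_nonneg P τbar τ hnonneg _ _) _ _ _

include hnonneg hτ hdiag ha0 ha1 haP in
lemma W_hop {j i : V} (hP : 0 < P j i) (t s : ℕ) (hs : τbar + 1 ≤ s) :
    a ^ s ≤ W P τbar τ t s (.inl j) (.inl i) := by
  by_cases hij : i = j
  · subst hij; exact W_diag_lb hnonneg hdiag ha0 haP t s i
  · set τ' := τ j i t with hτ'
    have h1 : τ' ≤ τbar := hτ j i t
    have hW : W P τbar τ t s
        = W P τbar τ (t + (τ'+1)) (s - τ' - 1) * W P τbar τ t (τ'+1) := by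
      have h := W_add P τbar τ t (τ'+1) (s - τ' - 1)
      rwa [show (τ'+1)+(s - τ' - 1) = s from by omega] at h
    rw [hW]
    calc a ^ s ≤ a ^ (s - τ') := pow_le_pow_of_le_one ha0 ha1 (by omega)
    _ = a ^ (s - τ' - 1) * a := by rw [← pow_succ]; congr 1; omega
    _ ≤ W P τbar τ (t + (τ'+1)) (s - τ' - 1) (.inl j) (.inl j)
        * W P τbar τ t (τ'+1) (.inl j) (.inl i) := by
          exact mul_le_mul (W_diag_lb hnonneg hdiag ha0 haP _ _ _)
            (le_trans (haP _ _ hP) (W_hop_raw hnonneg hτ hij hP t)) ha0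
            (W_nonneg P τbar τ hnonneg _ _ _ _)
    _ ≤ _ := mul_entry_le (W_nonneg P τbar τ hnonneg _ _) (W_nonneg P τbar τ hnonneg _ _) _ _ _

include hnonneg hτ hdiag ha0 ha1 haP in
lemma W_path : ∀ (n : ℕ) (j i : V), 0 < (P ^ n) j i → ∀ t s, n * (τbar + 1) ≤ s →
    a ^ s ≤ W P τbar τ t s (.inl j) (.inl i) := by
  intro n
  induction n with
  | zero =>
    intro j i hpos t s _
    have hji : j = i := by
      by_contra h
      rw [pow_zero, Matrix.one_apply, if_neg h] at hpos
      exact lt_irrefl 0 hpos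
    subst hji
    exact W_diag_lb hnonneg hdiag ha0 haP t s j
  | succ n ih =>
    intro j i hpos t s hs
    have hmul : (n+1) * (τbar+1) = n * (τbar+1) + (τbar+1) := by ring
    have hdec : ∃ r, 0 < (P ^ n) j r ∧ 0 < P r i := by
      rw [pow_succ, Matrix.mul_apply] at hpos
      by_contra hc
      push_neg at hc
      have hsum : ∀ r ∈ Finset.univ, (P ^ n) j r * P r i ≤ 0 := by
        intro r _
        rcases le_or_gt ((P ^ n) j r) 0 with h | h
        · exact mul_nonpos_of_nonpos_of_nonneg h (hnonneg r i)
        · exact mul_nonpos_of_nonneg_of_nonpos (le_of_lt h) (hc r h)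
      have := Finset.sum_nonpos hsum
      linarith
    obtain ⟨r, hr1, hr2⟩ := hdec
    have hW : W P τbar τ t s
        = W P τbar τ (t + (τbar+1)) (s - (τbar+1)) * W P τbar τ t (τbar+1) := by
      have h := W_add P τbar τ t (τbar+1) (s - (τbar+1))
      rwa [show (τbar+1)+(s - (τbar+1)) = s from by omega] at h
    rw [hW]
    calc a ^ s = a ^ (s - (τbar+1)) * a ^ (τbar+1) := by
          rw [← pow_add]; congr 1; omega
    _ ≤ W P τbar τ (t + (τbar+1)) (s - (τbar+1)) (.inl j) (.inl r)
        * W P τbar τ t (τbar+1) (.inl r) (.inl i) := by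
          exact mul_le_mul (ih j r hr1 _ _ (by omega))
            (W_hop hnonneg hτ hdiag ha0 ha1 haP hr2 t (τbar+1) le_rfl)
            (pow_nonneg ha0 _) (W_nonneg P τbar τ hnonneg _ _ _ _)
    _ ≤ _ := mul_entry_le (W_nonneg P τbar τ hnonneg _ _) (W_nonneg P τbar τ hnonneg _ _) _ _ _

include hnonneg hτ hdiag ha0 ha1 haP in
lemma W_window_lb {m : ℕ} (hm : ∀ j i, 0 < (P ^ m) j i) (t : ℕ) (j : V)
    (q : V ⊕ V × Fin (τbar+1)) :
    a ^ ((m+1) * (τbar+1)) ≤ W P τbar τ t ((m+1) * (τbar+1)) (.inl j) q := by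
  set B := (m+1) * (τbar+1) with hB
  have hBe : B = m * (τbar+1) + (τbar+1) := by rw [hB]; ring
  rcases q with i | ⟨i, ⟨e, he⟩⟩
  · exact W_path hnonneg hτ hdiag ha0 ha1 haP m j i (hm j i) t B (by omega)
  · have hB1 : m * (τbar + 1) ≤ B - (e+1) := by omega
    have hW : W P τbar τ t B
        = W P τbar τ (t + (e+1)) (B - (e+1)) * W P τbar τ t (e+1) := by
      have h := W_add P τbar τ t (e+1) (B - (e+1))
      rwa [show (e+1)+(B - (e+1)) = B from by omega] at h
    rw [hW]
    calc a ^ B ≤ a ^ (B - (e+1)) := pow_le_pow_of_le_one ha0 ha1 (by omega)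
    _ = a ^ (B - (e+1)) * 1 := (mul_one _).symm
    _ ≤ W P τbar τ (t + (e+1)) (B - (e+1)) (.inl j) (.inl i)
        * W P τbar τ t (e+1) (.inl i) (.inr (i, ⟨e, he⟩)) := by
          exact mul_le_mul
            (W_path hnonneg hτ hdiag ha0 ha1 haP m j i (hm j i) _ _ hB1)
            (W_drain_lb hnonneg i e he t) zero_le_one
            (W_nonneg P τbar τ hnonneg _ _ _ _)
    _ ≤ _ := mul_entry_le (W_nonneg P τbar τ hnonneg _ _) (W_nonneg P τbar τ hnonneg _ _) _ _ _

end LB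

section Traj

variable {P : Matrix V V ℝ} {τbar : ℕ} {τ : V → V → ℕ → ℕ}

lemma mulVec_entry (M : Matrix (V ⊕ V × Fin (τbar+1)) (V ⊕ V × Fin (τbar+1)) ℝ)
    (v : (V ⊕ V × Fin (τbar+1)) → ℝ) (p : V ⊕ V × Fin (τbar+1)) :
    (M *ᵥ v) p = (∑ i : V, M p (.inl i) * v (.inl i))
      + ∑ r : V × Fin (τbar+1), M p (.inr r) * v (.inr r) := by
  simp [Matrix.mulVec, dotProduct, Fintype.sum_sum_type]

lemma traj (hτ : ∀ j i m, τ j i m ≤ τbar) (w : ℕ → V → ℝ)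
    (hw : ∀ k (j : V), w (k + 1) j =
      P j j * w k j + ∑ i ∈ Finset.univ.erase j,
        P j i * ∑ m ∈ (Finset.range (k + 1)).filter (fun m => m + τ j i m = k), w m i) :
    ∀ k, (∀ j, (W P τbar τ 0 k *ᵥ Sum.elim (w 0) 0) (Sum.inl j) = w k j)
      ∧ (∀ (j : V) (d : Fin (τbar+1)),
          (W P τbar τ 0 k *ᵥ Sum.elim (w 0) 0) (Sum.inr (j, d))
            = ∑ i ∈ Finset.univ.erase j,
                P j i * ∑ m ∈ (Finset.range k).filter
                  (fun m => m + τ j i m = k + (d : ℕ)), w m i) := by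
  intro k
  induction k with
  | zero =>
    constructor
    · intro j; simp [W, Matrix.one_mulVec]
    · intro j d; simp [W, Matrix.one_mulVec]
  | succ k ih =>
    obtain ⟨ih1, ih2⟩ := ih
    set xv := W P τbar τ 0 k *ᵥ Sum.elim (w 0) 0 with hxv
    have hstep : W P τbar τ 0 (k+1) *ᵥ Sum.elim (w 0) 0 = A P τbar τ k *ᵥ xv := by
      rw [show W P τbar τ 0 (k+1) = A P τbar τ k * W P τbar τ 0 k from by
        show A P τbar τ (0+k) * _ = _
        rw [Nat.zero_add]]
      rw [hxv, Matrix.mulVec_mulVec]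
    constructor
    · intro j
      rw [hstep, mulVec_entry]
      -- real-node update
      have t1 : (∑ i : V, A P τbar τ k (.inl j) (.inl i) * xv (.inl i))
          = P j j * w k j + ∑ i ∈ Finset.univ.erase j,
              (if τ j i k = 0 then P j i else 0) * w k i := by
        rw [← Finset.add_sum_erase _ _ (Finset.mem_univ j)]
        congr 1
        · rw [A_ll, if_pos rfl, ih1 j]
        · apply Finset.sum_congr rfl
          intro i hi
          rw [A_ll, if_neg (Finset.ne_of_mem_erase hi), ih1 i]
      have t2 : (∑ r : V × Fin (τbar+1), A P τbar τ k (.inl j) (.inr r) * xv (.inr r))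
          = ∑ i ∈ Finset.univ.erase j,
              P j i * ∑ m ∈ (Finset.range k).filter
                (fun m => m + τ j i m = k), w m i := by
        rw [Finset.sum_eq_single (j, (0 : Fin (τbar+1)))]
        · rw [A_lr, if_pos ⟨rfl, rfl⟩, one_mul, ih2 j 0]
          simp
        · rintro ⟨i, d⟩ _ hne
          rw [A_lr, if_neg, zero_mul]
          rintro ⟨h1, h2⟩
          exact hne (by subst h1; exact Prod.ext rfl (Fin.ext h2))
        · simp
      rw [t1, t2, add_assoc, ← Finset.sum_add_distrib, hw k j]
      congr 1
      apply Finset.sum_congr rfl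
      intro i hi
      rw [Finset.range_add_one, Finset.filter_insert]
      by_cases h0 : τ j i k = 0
      · rw [if_pos (show k + τ j i k = k by omega), Finset.sum_insert (by simp), if_pos h0]
        ring
      · rw [if_neg (show ¬(k + τ j i k = k) by omega), if_neg h0, zero_mul, zero_add]
    · intro j d
      rw [hstep, mulVec_entry]
      have t1 : (∑ i : V, A P τbar τ k (.inr (j,d)) (.inl i) * xv (.inl i))
          = ∑ i ∈ Finset.univ.erase j,
              (if τ j i k = (d:ℕ)+1 then P j i else 0) * w k i := by
        rw [← Finset.add_sum_erase _ _ (Finset.mem_univ j)]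
        rw [A_rl, if_neg (by rintro ⟨h, -⟩; exact h rfl), zero_mul, zero_add]
        apply Finset.sum_congr rfl
        intro i hi
        rw [A_rl, ih1 i]
        by_cases hc : τ j i k = (d:ℕ)+1
        · rw [if_pos ⟨Finset.ne_of_mem_erase hi, hc⟩, if_pos hc]
        · rw [if_neg (by rintro ⟨-, h⟩; exact hc h), if_neg hc]
      rw [t1]
      by_cases hd : (d:ℕ) + 1 < τbar + 1
      · have t2 : (∑ r : V × Fin (τbar+1), A P τbar τ k (.inr (j,d)) (.inr r) * xv (.inr r))
            = ∑ i ∈ Finset.univ.erase j,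
                P j i * ∑ m ∈ (Finset.range k).filter
                  (fun m => m + τ j i m = k + ((d:ℕ)+1)), w m i := by
          rw [Finset.sum_eq_single (j, (⟨(d:ℕ)+1, hd⟩ : Fin (τbar+1)))]
          · rw [A_rr, if_pos ⟨rfl, rfl⟩, one_mul, ih2 j ⟨(d:ℕ)+1, hd⟩]
          · rintro ⟨i, e⟩ _ hne
            rw [A_rr, if_neg, zero_mul]
            rintro ⟨h1, h2⟩
            exact hne (by subst h1; exact Prod.ext rfl (Fin.ext h2))
          · simp
        rw [t2, ← Finset.sum_add_distrib]
        apply Finset.sum_congr rfl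
        intro i hi
        rw [show (k+1) + (d:ℕ) = k + ((d:ℕ)+1) from by omega,
          Finset.range_add_one, Finset.filter_insert]
        by_cases h0 : τ j i k = (d:ℕ)+1
        · rw [if_pos (show k + τ j i k = k + ((d:ℕ)+1) by omega),
            Finset.sum_insert (by simp), if_pos h0]
          ring
        · rw [if_neg (show ¬(k + τ j i k = k + ((d:ℕ)+1)) by omega), if_neg h0,
            zero_mul, zero_add]
      · -- d = τbar : everything vanishes
        have hdt : (d:ℕ) = τbar := by have := d.isLt; omega
        have t2 : (∑ r : V × Fin (τbar+1), A P τbar τ k (.inr (j,d)) (.inr r) * xv (.inr r))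
            = 0 := by
          apply Finset.sum_eq_zero
          rintro ⟨i, e⟩ _
          rw [A_rr, if_neg, zero_mul]
          rintro ⟨-, h⟩
          have := e.isLt; omega
        rw [t2, add_zero]
        apply Finset.sum_congr rfl
        intro i hi
        have hfil : (Finset.range (k+1)).filter
            (fun m => m + τ j i m = (k+1) + (d:ℕ)) = ∅ := by
          apply Finset.filter_false_of_mem
          intro m hm
          have := hτ j i m
          have := Finset.mem_range.mp hm
          omega
        rw [hfil]
        rw [if_neg (by have := hτ j i k; omega), zero_mul]
        simp

end Traj

section Contraction

variable {ι : Type*} [Fintype ι]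

lemma mulVec_sum_eq (Wm : Matrix ι ι ℝ) (hWc : ∀ q, ∑ p, Wm p q = 1) (v : ι → ℝ) :
    ∑ p, (Wm *ᵥ v) p = ∑ q, v q := by
  simp only [Matrix.mulVec, dotProduct]
  rw [Finset.sum_comm]
  apply Finset.sum_congr rfl
  intro q _
  rw [← Finset.sum_mul, hWc q, one_mul]

lemma l1_nonexpansive (Wm : Matrix ι ι ℝ) (hW0 : ∀ p q, 0 ≤ Wm p q)
    (hWc : ∀ q, ∑ p, Wm p q = 1) (dv : ι → ℝ) :
    ∑ p, |(Wm *ᵥ dv) p| ≤ ∑ q, |dv q| := by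
  calc ∑ p, |(Wm *ᵥ dv) p| ≤ ∑ p, ∑ q, Wm p q * |dv q| := by
        apply Finset.sum_le_sum
        intro p _
        calc |(Wm *ᵥ dv) p| ≤ ∑ q, |Wm p q * dv q| := by
              simpa [Matrix.mulVec, dotProduct] using
                Finset.abs_sum_le_sum_abs (fun q => Wm p q * dv q) Finset.univ
        _ = ∑ q, Wm p q * |dv q| := by
              apply Finset.sum_congr rfl
              intro q _
              rw [abs_mul, abs_of_nonneg (hW0 p q)]
  _ = ∑ q, |dv q| := by
        rw [Finset.sum_comm]
        apply Finset.sum_congr rfl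
        intro q _
        rw [← Finset.sum_mul, hWc q, one_mul]

lemma l1_contract (Wm : Matrix ι ι ℝ) (hW0 : ∀ p q, 0 ≤ Wm p q)
    (hWc : ∀ q, ∑ p, Wm p q = 1) {δ : ℝ} {R : Finset ι}
    (hδ : ∀ p ∈ R, ∀ q, δ ≤ Wm p q) (hδ0 : 0 ≤ δ)
    (dv : ι → ℝ) (hsum : ∑ q, dv q = 0) :
    ∑ p, |(Wm *ᵥ dv) p| ≤ (1 - R.card * δ) * ∑ q, |dv q| := by
  set pos := fun q => max (dv q) 0 with hpos
  set neg := fun q => max (-dv q) 0 with hneg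
  have hp0 : ∀ q, 0 ≤ pos q := fun q => le_max_right _ _
  have hn0 : ∀ q, 0 ≤ neg q := fun q => le_max_right _ _
  have hdv : ∀ q, dv q = pos q - neg q :=
    fun q => (max_zero_sub_max_neg_zero_eq_self (dv q)).symm
  have habs : ∀ q, |dv q| = pos q + neg q :=
    fun q => (max_zero_add_max_neg_zero_eq_abs_self (dv q)).symm
  set s := ∑ q, pos q with hs
  have hs0 : 0 ≤ s := Finset.sum_nonneg fun q _ => hp0 q
  have hsneg : ∑ q, neg q = s := by
    have h : ∑ q, pos q - ∑ q, neg q = 0 := by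
      rw [← Finset.sum_sub_distrib, ← hsum]
      exact Finset.sum_congr rfl fun q _ => (hdv q).symm
    linarith
  have habs_sum : ∑ q, |dv q| = 2 * s := by
    simp only [habs, Finset.sum_add_distrib, hsneg, ← hs]; ring
  -- images under Wm
  have hWpos_lb : ∀ p ∈ R, δ * s ≤ (Wm *ᵥ pos) p := by
    intro p hp
    simp only [Matrix.mulVec, dotProduct]
    rw [hs, Finset.mul_sum]
    exact Finset.sum_le_sum fun q _ =>
      mul_le_mul_of_nonneg_right (hδ p hp q) (hp0 q)
  have hWneg_lb : ∀ p ∈ R, δ * s ≤ (Wm *ᵥ neg) p := by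
    intro p hp
    simp only [Matrix.mulVec, dotProduct]
    calc δ * s = ∑ q, δ * neg q := by rw [← Finset.mul_sum, hsneg]
    _ ≤ ∑ q, Wm p q * neg q := Finset.sum_le_sum fun q _ =>
        mul_le_mul_of_nonneg_right (hδ p hp q) (hn0 q)
  have hWpos0 : ∀ p, 0 ≤ (Wm *ᵥ pos) p := fun p => Finset.sum_nonneg fun q _ =>
    mul_nonneg (hW0 p q) (hp0 q)
  have hWneg0 : ∀ p, 0 ≤ (Wm *ᵥ neg) p := fun p => Finset.sum_nonneg fun q _ =>
    mul_nonneg (hW0 p q) (hn0 q)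
  have hWdv : ∀ p, (Wm *ᵥ dv) p = (Wm *ᵥ pos) p - (Wm *ᵥ neg) p := by
    intro p
    have : dv = pos - neg := funext fun q => by rw [hdv q]; rfl
    rw [this, Matrix.mulVec_sub]
    rfl
  have key : ∀ p, |(Wm *ᵥ dv) p|
      = (Wm *ᵥ pos) p + (Wm *ᵥ neg) p - 2 * min ((Wm *ᵥ pos) p) ((Wm *ᵥ neg) p) := by
    intro p
    rw [hWdv p]
    rcases le_total ((Wm *ᵥ pos) p) ((Wm *ᵥ neg) p) with h | h
    · rw [abs_of_nonpos (by linarith), min_eq_left h]; ring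
    · rw [abs_of_nonneg (by linarith), min_eq_right h]; ring
  have hmin_lb : ∀ p, 0 ≤ min ((Wm *ᵥ pos) p) ((Wm *ᵥ neg) p) :=
    fun p => le_min (hWpos0 p) (hWneg0 p)
  have hminR : ∑ p, min ((Wm *ᵥ pos) p) ((Wm *ᵥ neg) p) ≥ R.card * (δ * s) := by
    calc ∑ p, min ((Wm *ᵥ pos) p) ((Wm *ᵥ neg) p)
        ≥ ∑ p ∈ R, min ((Wm *ᵥ pos) p) ((Wm *ᵥ neg) p) :=
          Finset.sum_le_sum_of_subset_of_nonneg (Finset.subset_univ R)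
            (fun p _ _ => hmin_lb p)
    _ ≥ ∑ p ∈ R, δ * s := Finset.sum_le_sum fun p hp =>
          le_min (hWpos_lb p hp) (hWneg_lb p hp)
    _ = R.card * (δ * s) := by rw [Finset.sum_const, nsmul_eq_mul]
  have hsum_pos : ∑ p, (Wm *ᵥ pos) p = s := by rw [mulVec_sum_eq Wm hWc, hs]
  have hsum_neg : ∑ p, (Wm *ᵥ neg) p = s := by rw [mulVec_sum_eq Wm hWc, hsneg]
  calc ∑ p, |(Wm *ᵥ dv) p|
      = ∑ p, ((Wm *ᵥ pos) p + (Wm *ᵥ neg) p - 2 * min ((Wm *ᵥ pos) p) ((Wm *ᵥ neg) p)) := by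
        exact Finset.sum_congr rfl fun p _ => key p
  _ = 2 * s - 2 * ∑ p, min ((Wm *ᵥ pos) p) ((Wm *ᵥ neg) p) := by
        rw [Finset.sum_sub_distrib, Finset.sum_add_distrib, hsum_pos, hsum_neg,
          ← Finset.mul_sum]
        ring
  _ ≤ 2 * s - 2 * (R.card * (δ * s)) := by linarith [hminR]
  _ = (1 - R.card * δ) * (2 * s) := by ring
  _ = (1 - R.card * δ) * ∑ q, |dv q| := by rw [habs_sum]

end Contraction

end RRC

/-- Robustified (asynchronous) ratio consensus (Lemma 2): for a primitive
column-stochastic matrix `P` with positive diagonal, and bounded time-varying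
delays `τ(j,i,m) ≤ τ̄`, the entrywise ratio of the two delayed iterations
(with initial conditions `y₀` and the all-ones vector) converges at every node
to the average `(∑ ℓ, y₀ ℓ) / |V|`. -/
theorem robust_ratio_consensus_average
    {V : Type*} [Fintype V] [DecidableEq V] [Nonempty V]
    (P : Matrix V V ℝ)
    (hnonneg : ∀ j i, 0 ≤ P j i)
    (hcol : ∀ i, ∑ j, P j i = 1)
    (hprim : ∃ m : ℕ, 1 ≤ m ∧ ∀ j i, 0 < (P ^ m) j i)
    (hdiag : ∀ j, 0 < P j j)
    (τbar : ℕ) (τ : V → V → ℕ → ℕ)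
    (hτ : ∀ (j i : V) (m : ℕ), τ j i m ≤ τbar)
    (y₀ : V → ℝ) (y z : ℕ → V → ℝ)
    (hy0 : y 0 = y₀) (hz0 : z 0 = fun _ => (1 : ℝ))
    (hy : ∀ k (j : V), y (k + 1) j =
      P j j * y k j + ∑ i ∈ Finset.univ.erase j,
        P j i * ∑ m ∈ (Finset.range (k + 1)).filter (fun m => m + τ j i m = k), y m i)
    (hz : ∀ k (j : V), z (k + 1) j =
      P j j * z k j + ∑ i ∈ Finset.univ.erase j,
        P j i * ∑ m ∈ (Finset.range (k + 1)).filter (fun m => m + τ j i m = k), z m i) :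
    ∀ j : V, Tendsto (fun k => y k j / z k j) atTop
      (nhds ((∑ ℓ, y₀ ℓ) / (Fintype.card V : ℝ))) := by
  classical
  obtain ⟨m, hm1, hmpos⟩ := hprim
  -- the minimal positive entry of P
  set PS : Finset ℝ := (Finset.univ.filter (fun p : V × V => 0 < P p.1 p.2)).image
    (fun p => P p.1 p.2) with hPS
  have hPSne : PS.Nonempty := by
    refine ⟨P (Classical.arbitrary V) (Classical.arbitrary V), ?_⟩
    rw [hPS]
    exact Finset.mem_image.mpr ⟨(Classical.arbitrary V, Classical.arbitrary V),
      Finset.mem_filter.mpr ⟨Finset.mem_univ _, hdiag _⟩, rfl⟩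
  set a := PS.min' hPSne with haa
  have ha0 : 0 < a := by
    obtain ⟨p, hp, hpe⟩ := Finset.mem_image.mp (PS.min'_mem hPSne)
    rw [haa, ← hpe]
    exact (Finset.mem_filter.mp hp).2
  have haP : ∀ j i, 0 < P j i → a ≤ P j i := by
    intro j i h
    apply PS.min'_le
    exact Finset.mem_image.mpr ⟨(j, i), Finset.mem_filter.mpr ⟨Finset.mem_univ _, h⟩, rfl⟩
  have haentry : ∀ j i, P j i ≤ 1 := by
    intro j i
    calc P j i ≤ ∑ j', P j' i :=
        Finset.single_le_sum (f := fun j' => P j' i) (fun j' _ => hnonneg j' i)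
          (Finset.mem_univ j)
    _ = 1 := hcol i
  have ha1 : a ≤ 1 := le_trans (haP _ _ (hdiag (Classical.arbitrary V))) (haentry _ _)
  -- window length and entry lower bound
  set B := (m + 1) * (τbar + 1) with hBB
  have hB0 : 0 < B := by positivity
  set δ := a ^ B with hδδ
  have hδ0 : 0 < δ := pow_pos ha0 B
  have hwin : ∀ t (j : V) q, δ ≤ RRC.W P τbar τ t B (.inl j) q := fun t j q =>
    RRC.W_window_lb hnonneg hτ hdiag (le_of_lt ha0) ha1 haP hmpos t j q
  -- real-node rows
  set R : Finset (V ⊕ V × Fin (τbar+1)) := Finset.univ.image Sum.inl with hRR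
  have hRcard : R.card = Fintype.card V := by
    rw [hRR, Finset.card_image_of_injective _ Sum.inl_injective, Finset.card_univ]
  have hmemR : ∀ p ∈ R, ∃ j : V, p = Sum.inl j := by
    intro p hp
    rw [hRR] at hp
    obtain ⟨j, _, hj⟩ := Finset.mem_image.mp hp
    exact ⟨j, hj.symm⟩
  set N : ℝ := (Fintype.card V : ℝ) with hNN
  have hN0 : 0 < N := by
    rw [hNN]
    exact_mod_cast Fintype.card_pos
  have hNδ : N * δ ≤ 1 := by
    have h1 : (1:ℝ) = ∑ p, RRC.W P τbar τ 0 B p (.inl (Classical.arbitrary V)) :=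
      (RRC.W_colsum P τbar τ hcol hτ 0 B _).symm
    have h2 : ∑ p ∈ R, RRC.W P τbar τ 0 B p (.inl (Classical.arbitrary V))
        ≤ ∑ p, RRC.W P τbar τ 0 B p (.inl (Classical.arbitrary V)) :=
      Finset.sum_le_sum_of_subset_of_nonneg (Finset.subset_univ R)
        (fun p _ _ => RRC.W_nonneg P τbar τ hnonneg _ _ _ _)
    have h3 : N * δ ≤ ∑ p ∈ R, RRC.W P τbar τ 0 B p (.inl (Classical.arbitrary V)) := by
      calc N * δ = ∑ _p ∈ R, δ := by
            rw [Finset.sum_const, nsmul_eq_mul, hRcard, hNN]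
      _ ≤ _ := Finset.sum_le_sum (fun p hp => by
            obtain ⟨j', hj'⟩ := hmemR p hp
            rw [hj']
            exact hwin 0 j' _)
    linarith
  set r : ℝ := 1 - N * δ with hrr
  have hr0 : 0 ≤ r := by rw [hrr]; linarith
  have hr1 : r < 1 := by
    rw [hrr]
    have : 0 < N * δ := mul_pos hN0 hδ0
    linarith
  -- trajectories
  have hyT := RRC.traj hτ y hy
  have hzT := RRC.traj hτ z hz
  set xy : ℕ → (V ⊕ V × Fin (τbar+1)) → ℝ :=
    fun k => RRC.W P τbar τ 0 k *ᵥ Sum.elim (y 0) 0 with hxy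
  set xz : ℕ → (V ⊕ V × Fin (τbar+1)) → ℝ :=
    fun k => RRC.W P τbar τ 0 k *ᵥ Sum.elim (z 0) 0 with hxz
  have hyx : ∀ k j, xy k (.inl j) = y k j := fun k j => (hyT k).1 j
  have hzx : ∀ k j, xz k (.inl j) = z k j := fun k j => (hzT k).1 j
  -- decomposition of W
  have hWdec : ∀ t n, RRC.W P τbar τ 0 (t + n)
      = RRC.W P τbar τ t n * RRC.W P τbar τ 0 t := by
    intro t n
    have h := RRC.W_add P τbar τ 0 t n
    rwa [Nat.zero_add] at h
  -- nonnegativity and sum of xz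
  have hxz0 : ∀ k q, 0 ≤ xz k q := by
    intro k q
    simp only [hxz]
    apply Finset.sum_nonneg
    intro p _
    apply mul_nonneg (RRC.W_nonneg P τbar τ hnonneg _ _ _ _)
    rcases p with i | rr
    · rw [hz0]; norm_num
    · norm_num
  have hxzsum : ∀ k, ∑ q, xz k q = N := by
    intro k
    simp only [hxz]
    rw [RRC.mulVec_sum_eq _ (RRC.W_colsum P τbar τ hcol hτ 0 k)]
    rw [Fintype.sum_sum_type]
    simp [hz0, hNN]
  -- lower bound on z at every real node
  have hzlb : ∀ (j : V) (k : ℕ), B ≤ k → δ * N ≤ z k j := by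
    intro j k hk
    rw [← hzx k j]
    have h1 : RRC.W P τbar τ 0 k
        = RRC.W P τbar τ (k - B) B * RRC.W P τbar τ 0 (k - B) := by
      have h2 := hWdec (k - B) B
      rwa [show (k - B) + B = k from by omega] at h2
    have hdec : xz k (.inl j) = (RRC.W P τbar τ (k - B) B *ᵥ xz (k - B)) (.inl j) := by
      simp only [hxz]
      rw [h1, ← Matrix.mulVec_mulVec]
    rw [hdec]
    calc δ * N = δ * ∑ q, xz (k - B) q := by rw [hxzsum]
    _ = ∑ q, δ * xz (k - B) q := Finset.mul_sum _ _ _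
    _ ≤ ∑ q, RRC.W P τbar τ (k - B) B (.inl j) q * xz (k - B) q :=
        Finset.sum_le_sum fun q _ =>
          mul_le_mul_of_nonneg_right (hwin (k - B) j q) (hxz0 (k - B) q)
    _ = _ := rfl
  -- formulas for y and z at real nodes
  have hyform : ∀ k (j : V), y k j = ∑ l, RRC.W P τbar τ 0 k (.inl j) (.inl l) * y₀ l := by
    intro k j
    rw [← hyx k j]
    simp only [hxy]
    rw [RRC.mulVec_entry]
    simp [hy0]
  have hzform : ∀ k (j : V), z k j = ∑ l, RRC.W P τbar τ 0 k (.inl j) (.inl l) := by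
    intro k j
    rw [← hzx k j]
    simp only [hxz]
    rw [RRC.mulVec_entry]
    simp [hz0]
  -- column-difference errors
  set l₀ : V := Classical.arbitrary V with hl₀
  set E : V → ℕ → ℝ := fun l k =>
    ∑ p, |RRC.W P τbar τ 0 k p (.inl l) - RRC.W P τbar τ 0 k p (.inl l₀)| with hEE
  have hE0 : ∀ l k, 0 ≤ E l k := fun l k => Finset.sum_nonneg fun p _ => abs_nonneg _
  have hEdvec : ∀ l t n, (fun p => RRC.W P τbar τ 0 (t + n) p (.inl l)
        - RRC.W P τbar τ 0 (t + n) p (.inl l₀))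
      = RRC.W P τbar τ t n *ᵥ (fun p => RRC.W P τbar τ 0 t p (.inl l)
        - RRC.W P τbar τ 0 t p (.inl l₀)) := by
    intro l t n
    funext p
    rw [hWdec t n]
    simp only [Matrix.mul_apply, Matrix.mulVec, dotProduct,
      ← Finset.sum_sub_distrib]
    exact Finset.sum_congr rfl fun q _ => by ring
  have hEzero : ∀ l t, ∑ p, (RRC.W P τbar τ 0 t p (.inl l)
      - RRC.W P τbar τ 0 t p (.inl l₀)) = 0 := by
    intro l t
    rw [Finset.sum_sub_distrib, RRC.W_colsum P τbar τ hcol hτ,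
      RRC.W_colsum P τbar τ hcol hτ, sub_self]
  have hEmono : ∀ l t n, E l (t + n) ≤ E l t := by
    intro l t n
    simp only [hEE]
    calc ∑ p, |RRC.W P τbar τ 0 (t+n) p (.inl l) - RRC.W P τbar τ 0 (t+n) p (.inl l₀)|
        = ∑ p, |(RRC.W P τbar τ t n *ᵥ (fun p => RRC.W P τbar τ 0 t p (.inl l)
            - RRC.W P τbar τ 0 t p (.inl l₀))) p| := by
          rw [← hEdvec l t n]
    _ ≤ _ := RRC.l1_nonexpansive _ (RRC.W_nonneg P τbar τ hnonneg t n)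
          (RRC.W_colsum P τbar τ hcol hτ t n) _
  have hEcontr : ∀ l t, E l (t + B) ≤ r * E l t := by
    intro l t
    rw [hEE, hrr]
    calc ∑ p, |RRC.W P τbar τ 0 (t+B) p (.inl l) - RRC.W P τbar τ 0 (t+B) p (.inl l₀)|
        = ∑ p, |(RRC.W P τbar τ t B *ᵥ (fun p => RRC.W P τbar τ 0 t p (.inl l)
            - RRC.W P τbar τ 0 t p (.inl l₀))) p| := by
          rw [← hEdvec l t B]
    _ ≤ (1 - R.card * δ) * ∑ p, |RRC.W P τbar τ 0 t p (.inl l)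
            - RRC.W P τbar τ 0 t p (.inl l₀)| := by
          apply RRC.l1_contract _ (RRC.W_nonneg P τbar τ hnonneg t B)
            (RRC.W_colsum P τbar τ hcol hτ t B) _ (le_of_lt hδ0) _ (hEzero l t)
          intro p hp q
          obtain ⟨j', hj'⟩ := hmemR p hp
          rw [hj']
          exact hwin t j' q
    _ = (1 - N * δ) * ∑ p, |RRC.W P τbar τ 0 t p (.inl l)
            - RRC.W P τbar τ 0 t p (.inl l₀)| := by
          rw [hRcard, hNN]
  have hE2 : ∀ l k, E l k ≤ 2 := by
    intro l k
    simp only [hEE]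
    calc ∑ p, |RRC.W P τbar τ 0 k p (.inl l) - RRC.W P τbar τ 0 k p (.inl l₀)|
        ≤ ∑ p, (RRC.W P τbar τ 0 k p (.inl l) + RRC.W P τbar τ 0 k p (.inl l₀)) := by
          apply Finset.sum_le_sum
          intro p _
          have h1 := RRC.W_nonneg P τbar τ hnonneg 0 k p (.inl l)
          have h2 := RRC.W_nonneg P τbar τ hnonneg 0 k p (.inl l₀)
          rw [abs_sub_le_iff]
          constructor <;> linarith
    _ = 2 := by
          rw [Finset.sum_add_distrib, RRC.W_colsum P τbar τ hcol hτ,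
            RRC.W_colsum P τbar τ hcol hτ]
          norm_num
  have hEgeo : ∀ l n, E l (B * n) ≤ 2 * r ^ n := by
    intro l n
    induction n with
    | zero => simpa using hE2 l 0
    | succ n ih =>
      calc E l (B * (n+1)) = E l (B * n + B) := by ring_nf
      _ ≤ r * E l (B * n) := hEcontr l (B * n)
      _ ≤ r * (2 * r ^ n) := mul_le_mul_of_nonneg_left ih hr0
      _ = 2 * r ^ (n+1) := by ring
  have hEbound : ∀ l k, E l k ≤ 2 * r ^ (k / B) := by
    intro l k
    have h1 : B * (k / B) + (k - B * (k / B)) = k := by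
      have := Nat.mul_div_le k B
      omega
    calc E l k = E l (B * (k / B) + (k - B * (k / B))) := by rw [h1]
    _ ≤ E l (B * (k / B)) := hEmono l _ _
    _ ≤ 2 * r ^ (k / B) := hEgeo l _
  have hdivtop : Tendsto (fun k : ℕ => k / B) atTop atTop := by
    apply Filter.tendsto_atTop_atTop.mpr
    intro b
    exact ⟨b * B, fun k hk => (Nat.le_div_iff_mul_le hB0).mpr hk⟩
  have hElim : ∀ l, Tendsto (fun k => E l k) atTop (nhds 0) := by
    intro l
    apply squeeze_zero (fun k => hE0 l k) (fun k => hEbound l k)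
    have h1 : Tendsto (fun n : ℕ => r ^ n) atTop (nhds 0) :=
      tendsto_pow_atTop_nhds_zero_of_lt_one hr0 hr1
    have h2 := (h1.comp hdivtop).const_mul (2:ℝ)
    simpa using h2
  -- final assembly
  intro j
  set S : ℝ := ∑ ℓ, y₀ ℓ with hSS
  have hnum : ∀ k, N * y k j - S * z k j
      = ∑ l, (RRC.W P τbar τ 0 k (.inl j) (.inl l)
          - RRC.W P τbar τ 0 k (.inl j) (.inl l₀)) * (N * y₀ l - S) := by
    intro k
    have hzero : ∑ l, (N * y₀ l - S) = 0 := by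
      rw [Finset.sum_sub_distrib, ← Finset.mul_sum, ← hSS, Finset.sum_const,
        nsmul_eq_mul, Finset.card_univ, ← hNN]
      ring
    have expand : ∑ l, (RRC.W P τbar τ 0 k (.inl j) (.inl l)
          - RRC.W P τbar τ 0 k (.inl j) (.inl l₀)) * (N * y₀ l - S)
        = (∑ l, RRC.W P τbar τ 0 k (.inl j) (.inl l) * (N * y₀ l - S))
          - RRC.W P τbar τ 0 k (.inl j) (.inl l₀) * ∑ l, (N * y₀ l - S) := by
      rw [Finset.mul_sum, ← Finset.sum_sub_distrib]
      exact Finset.sum_congr rfl fun l _ => by ring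
    rw [expand, hzero, mul_zero, sub_zero, hyform k j, hzform k j]
    rw [Finset.mul_sum, Finset.mul_sum, ← Finset.sum_sub_distrib]
    exact (Finset.sum_congr rfl fun l _ => by ring).symm
  set G : ℕ → ℝ := fun k => (∑ l, E l k * |N * y₀ l - S|) / (N * (δ * N)) with hGG
  have hGlim : Tendsto G atTop (nhds 0) := by
    have h1 : Tendsto (fun k => ∑ l, E l k * |N * y₀ l - S|) atTop (nhds 0) := by
      have h2 : Tendsto (fun k => ∑ l, E l k * |N * y₀ l - S|) atTop
          (nhds (∑ l : V, 0 * |N * y₀ l - S|)) := by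
        apply tendsto_finset_sum
        intro l _
        exact (hElim l).mul_const _
      simpa using h2
    simp only [hGG]
    simpa using h1.div_const (N * (δ * N))
  have hbound : ∀ k, B ≤ k → |y k j / z k j - S / N| ≤ G k := by
    intro k hk
    have hzpos : 0 < z k j := lt_of_lt_of_le (mul_pos hδ0 hN0) (hzlb j k hk)
    have heq : y k j / z k j - S / N = (N * y k j - S * z k j) / (N * z k j) := by
      field_simp
    rw [heq, abs_div, abs_of_pos (mul_pos hN0 hzpos)]
    have hnum_le : |N * y k j - S * z k j| ≤ ∑ l, E l k * |N * y₀ l - S| := by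
      rw [hnum k]
      calc |∑ l, (RRC.W P τbar τ 0 k (.inl j) (.inl l)
            - RRC.W P τbar τ 0 k (.inl j) (.inl l₀)) * (N * y₀ l - S)|
          ≤ ∑ l, |(RRC.W P τbar τ 0 k (.inl j) (.inl l)
            - RRC.W P τbar τ 0 k (.inl j) (.inl l₀)) * (N * y₀ l - S)| :=
            Finset.abs_sum_le_sum_abs _ _
      _ ≤ ∑ l, E l k * |N * y₀ l - S| := by
            apply Finset.sum_le_sum
            intro l _
            rw [abs_mul]
            apply mul_le_mul_of_nonneg_right _ (abs_nonneg _)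
            simp only [hEE]
            exact Finset.single_le_sum
              (f := fun p => |RRC.W P τbar τ 0 k p (.inl l)
                - RRC.W P τbar τ 0 k p (.inl l₀)|)
              (fun p _ => abs_nonneg _) (Finset.mem_univ (Sum.inl j))
    calc |N * y k j - S * z k j| / (N * z k j)
        ≤ (∑ l, E l k * |N * y₀ l - S|) / (N * z k j) :=
          (div_le_div_iff_of_pos_right (mul_pos hN0 hzpos)).mpr hnum_le
    _ ≤ (∑ l, E l k * |N * y₀ l - S|) / (N * (δ * N)) := by
          apply div_le_div_of_nonneg_left _ (by positivity) _
          · apply Finset.sum_nonneg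
            intro l _
            exact mul_nonneg (hE0 l k) (abs_nonneg _)
          · exact mul_le_mul_of_nonneg_left (hzlb j k hk) (le_of_lt hN0)
    _ = G k := rfl
  have hdiff : Tendsto (fun k => y k j / z k j - S / N) atTop (nhds 0) := by
    apply squeeze_zero_norm' _ hGlim
    filter_upwards [Filter.eventually_ge_atTop B] with k hk
    exact hbound k hk
  have hfin := hdiff.add_const (S / N)
  simp only [sub_add_cancel, zero_add] at hfin
  exact hfin
end

section
/- Let V be a nonempty finite set and let P be a V×V real matrix that is nonnegative, column stochastic (Σ_{j∈V} P(j,i) = 1 for every i), primitive (some power P^m has all entries strictly positive), and with strictly positive diagonal (P(j,j) > 0 for all j). Let τ̄ ∈ ℕ and let τ : V → V → ℕ → ℕ be delay functions with τ(j,i,m) ≤ τ̄ for all j, i, m. Define y : ℕ → V → ℝ by the delayed iteration y(k+1)(j) = P(j,j)·y(k)(j) + Σ_{i≠j} P(j,i) · ( Σ_{m ≤ k, m + τ(j,i,m) = k} y(m)(i) ), with initial condition y(0) = y₀ : V → ℝ, and define z : ℕ → V → ℝ by the same delayed iteration with the same delays and initial condition z(0) = z₀ : V → ℝ where z₀(i)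 > 0 for all i. Let μ(k)(j) = y(k)(j) / z(k)(j). Then for every ε > 0 and every positive integer W (in particular W = (1+τ̄)·D for any positive integer D), there exists r₀ ∈ ℕ such that for all r ≥ r₀: max_{j∈V} μ(r·W)(j) − min_{j∈V} μ(r·W)(j) < ε. Consequently, the distributed termination test of Algorithm 2, which every W steps compares the (asynchronous) max- and min-consensus values of the ratios against ε, is passed after finitely many rounds, i.e. Algorithm 2 converges in finite time. -/
open Filter

section AsyncRC

variable {V : Type*} [Fintype V] [DecidableEq V]

/-- The delayed linear iteration predicate. -/
def DSol (P : Matrix V V ℝ) (τ : V → V → ℕ → ℕ) (u : ℕ → V → ℝ) : Prop :=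
  ∀ k (j : V), u (k + 1) j =
    P j j * u k j + ∑ i ∈ Finset.univ.erase j,
      P j i * ∑ m ∈ (Finset.range (k + 1)).filter (fun m => m + τ j i m = k), u m i

variable {P : Matrix V V ℝ} {τ : V → V → ℕ → ℕ} {τbar : ℕ}

lemma matrix_pow_nonneg (hP : ∀ j i, 0 ≤ P j i) : ∀ L (j i : V), 0 ≤ (P ^ L) j i := by
  intro L
  induction L with
  | zero =>
      intro j i
      simp only [pow_zero, Matrix.one_apply]
      split <;> norm_num
  | succ n ih =>
      intro j i
      rw [pow_succ, Matrix.mul_apply]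
      exact Finset.sum_nonneg fun l _ => mul_nonneg (ih j l) (hP l i)

lemma dsol_combo {z w : ℕ → V → ℝ} (hz : DSol P τ z) (hw : DSol P τ w) (b c : ℝ) :
    DSol P τ (fun t j => b * z t j + c * w t j) := by
  intro k j
  simp only
  rw [hz k j, hw k j]
  have hinner : ∀ i : V,
      ∑ m ∈ (Finset.range (k + 1)).filter (fun m => m + τ j i m = k),
        (b * z m i + c * w m i)
      = b * (∑ m ∈ (Finset.range (k + 1)).filter (fun m => m + τ j i m = k), z m i)
        + c * (∑ m ∈ (Finset.range (k + 1)).filter (fun m => m + τ j i m = k), w m i) := by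
    intro i
    rw [Finset.sum_add_distrib, Finset.mul_sum, Finset.mul_sum]
  have hR : ∑ i ∈ Finset.univ.erase j,
      P j i * ∑ m ∈ (Finset.range (k + 1)).filter (fun m => m + τ j i m = k),
        (b * z m i + c * w m i)
      = b * (∑ i ∈ Finset.univ.erase j,
          P j i * ∑ m ∈ (Finset.range (k + 1)).filter (fun m => m + τ j i m = k), z m i)
        + c * (∑ i ∈ Finset.univ.erase j,
          P j i * ∑ m ∈ (Finset.range (k + 1)).filter (fun m => m + τ j i m = k), w m i) := by
    rw [Finset.mul_sum, Finset.mul_sum, ← Finset.sum_add_distrib]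
    refine Finset.sum_congr rfl fun i _ => ?_
    rw [hinner i]; ring
  rw [hR]
  ring

lemma dsol_nonneg0 (hP : ∀ j i, 0 ≤ P j i) {u : ℕ → V → ℝ} (hu : DSol P τ u)
    (hbase : ∀ j, 0 ≤ u 0 j) : ∀ t j, 0 ≤ u t j := by
  intro t
  induction t using Nat.strong_induction_on with
  | _ t IH =>
    match t with
    | 0 => exact hbase
    | (s+1) =>
      intro j
      rw [hu s j]
      have h1 : 0 ≤ P j j * u s j := mul_nonneg (hP j j) (IH s (by omega) j)
      have h2 : 0 ≤ ∑ i ∈ Finset.univ.erase j,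
          P j i * ∑ m ∈ (Finset.range (s + 1)).filter (fun m => m + τ j i m = s), u m i := by
        refine Finset.sum_nonneg fun i _ => mul_nonneg (hP j i) (Finset.sum_nonneg fun m hm => ?_)
        have hm' := Finset.mem_filter.mp hm
        have : m < s + 1 := Finset.mem_range.mp hm'.1
        exact IH m (by omega) i
      linarith

lemma dsol_nonneg (hP : ∀ j i, 0 ≤ P j i) (hτ : ∀ (j i : V) m, τ j i m ≤ τbar)
    {u : ℕ → V → ℝ} (hu : DSol P τ u) (k₀ : ℕ)
    (hbase : ∀ t j, k₀ ≤ t → t ≤ k₀ + τbar → 0 ≤ u t j) :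
    ∀ t, k₀ ≤ t → ∀ j, 0 ≤ u t j := by
  intro t
  induction t using Nat.strong_induction_on with
  | _ t IH =>
    intro ht j
    by_cases h : t ≤ k₀ + τbar
    · exact hbase t j ht h
    · obtain ⟨s, rfl⟩ : ∃ s, t = s + 1 := ⟨t - 1, by omega⟩
      rw [hu s j]
      have h1 : 0 ≤ P j j * u s j := mul_nonneg (hP j j) (IH s (by omega) (by omega) j)
      have h2 : 0 ≤ ∑ i ∈ Finset.univ.erase j,
          P j i * ∑ m ∈ (Finset.range (s + 1)).filter (fun m => m + τ j i m = s), u m i := by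
        refine Finset.sum_nonneg fun i _ => mul_nonneg (hP j i) (Finset.sum_nonneg fun m hm => ?_)
        have hm' := Finset.mem_filter.mp hm
        have hm1 : m < s + 1 := Finset.mem_range.mp hm'.1
        have hm2 : m + τ j i m = s := hm'.2
        have := hτ j i m
        exact IH m (by omega) (by omega) i
      linarith

lemma dsol_self_step (hP : ∀ j i, 0 ≤ P j i) (hτ : ∀ (j i : V) m, τ j i m ≤ τbar)
    {u : ℕ → V → ℝ} (hu : DSol P τ u) {k₀ t : ℕ}
    (hn : ∀ m j, k₀ ≤ m → 0 ≤ u m j) (ht : k₀ + τbar ≤ t) (j : V) :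
    P j j * u t j ≤ u (t + 1) j := by
  rw [hu t j]
  have h2 : 0 ≤ ∑ i ∈ Finset.univ.erase j,
      P j i * ∑ m ∈ (Finset.range (t + 1)).filter (fun m => m + τ j i m = t), u m i := by
    refine Finset.sum_nonneg fun i _ => mul_nonneg (hP j i) (Finset.sum_nonneg fun m hm => ?_)
    have hm' := Finset.mem_filter.mp hm
    have hm2 : m + τ j i m = t := hm'.2
    have := hτ j i m
    exact hn m i (by omega)
  linarith

lemma dsol_hop (hP : ∀ j i, 0 ≤ P j i) (hτ : ∀ (j i : V) m, τ j i m ≤ τbar)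
    {u : ℕ → V → ℝ} (hu : DSol P τ u) {k₀ s : ℕ}
    (hn : ∀ m j, k₀ ≤ m → 0 ≤ u m j) (hs : k₀ + τbar ≤ s) {i j : V} (hij : i ≠ j) :
    P j i * u s i ≤ u (s + τ j i s + 1) j := by
  rw [hu (s + τ j i s) j]
  have h1 : 0 ≤ P j j * u (s + τ j i s) j :=
    mul_nonneg (hP j j) (hn _ _ (by omega))
  have hmem : i ∈ Finset.univ.erase j := Finset.mem_erase.mpr ⟨hij, Finset.mem_univ i⟩
  rw [← Finset.add_sum_erase _ _ hmem]
  have hterm : P j i * u s i ≤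
      P j i * ∑ m ∈ (Finset.range (s + τ j i s + 1)).filter
        (fun m => m + τ j i m = s + τ j i s), u m i := by
    refine mul_le_mul_of_nonneg_left ?_ (hP j i)
    refine Finset.single_le_sum (f := fun m => u m i) (fun m hm => ?_) ?_
    · have hm' := Finset.mem_filter.mp hm
      have := hτ j i m
      exact hn m i (by omega)
    · refine Finset.mem_filter.mpr ⟨Finset.mem_range.mpr (by omega), rfl⟩
  have hrest : 0 ≤ ∑ i' ∈ (Finset.univ.erase j).erase i,
      P j i' * ∑ m ∈ (Finset.range (s + τ j i s + 1)).filter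
        (fun m => m + τ j i' m = s + τ j i s), u m i' := by
    refine Finset.sum_nonneg fun i' _ => mul_nonneg (hP j i') (Finset.sum_nonneg fun m hm => ?_)
    have hm' := Finset.mem_filter.mp hm
    have := hτ j i' m
    exact hn m i' (by omega)
  linarith

lemma dsol_pad (hP : ∀ j i, 0 ≤ P j i) (hτ : ∀ (j i : V) m, τ j i m ≤ τbar)
    (hdiag : ∀ j, 0 < P j j) {p₀ : ℝ} (hp₀pos : 0 < p₀)
    (hp₀min : ∀ j i, 0 < P j i → p₀ ≤ P j i)
    {u : ℕ → V → ℝ} (hu : DSol P τ u) {k₀ s : ℕ}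
    (hn : ∀ m j, k₀ ≤ m → 0 ≤ u m j) (hs : k₀ + τbar ≤ s) (j : V) :
    ∀ d, p₀ ^ d * u s j ≤ u (s + d) j := by
  intro d
  induction d with
  | zero => simpa using le_refl (u s j)
  | succ d ih =>
      have h1 : P j j * u (s + d) j ≤ u (s + d + 1) j :=
        dsol_self_step hP hτ hu hn (by omega) j
      have h0 : 0 ≤ u (s + d) j := hn _ _ (by omega)
      have h2 : p₀ * u (s + d) j ≤ P j j * u (s + d) j :=
        mul_le_mul_of_nonneg_right (hp₀min j j (hdiag j)) h0
      have h3 : p₀ * (p₀ ^ d * u s j) ≤ p₀ * u (s + d) j :=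
        mul_le_mul_of_nonneg_left ih (le_of_lt hp₀pos)
      calc p₀ ^ (d + 1) * u s j = p₀ * (p₀ ^ d * u s j) := by ring
        _ ≤ p₀ * u (s + d) j := h3
        _ ≤ P j j * u (s + d) j := h2
        _ ≤ u (s + d + 1) j := h1

lemma dsol_reach (hP : ∀ j i, 0 ≤ P j i) (hτ : ∀ (j i : V) m, τ j i m ≤ τbar)
    (hdiag : ∀ j, 0 < P j j) {p₀ : ℝ} (hp₀pos : 0 < p₀) (hp₀le1 : p₀ ≤ 1)
    (hp₀min : ∀ j i, 0 < P j i → p₀ ≤ P j i)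
    {u : ℕ → V → ℝ} (hu : DSol P τ u) (k₀ : ℕ)
    (hn : ∀ m j, k₀ ≤ m → 0 ≤ u m j) :
    ∀ L (i j : V), 0 < (P ^ L) j i → ∀ s t, k₀ + τbar ≤ s → s + L * (τbar + 1) ≤ t →
      p₀ ^ (t - s) * u s i ≤ u t j := by
  intro L
  induction L with
  | zero =>
      intro i j hpos s t hs ht
      have hji : j = i := by
        by_contra h
        rw [pow_zero, Matrix.one_apply_ne h] at hpos
        exact lt_irrefl _ hpos
      subst hji
      have := dsol_pad hP hτ hdiag hp₀pos hp₀min hu hn hs j (t - s)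
      rwa [show s + (t - s) = t by omega] at this
  | succ L ih =>
      intro i j hpos s t hs ht
      have hmul : (L + 1) * (τbar + 1) = L * (τbar + 1) + (τbar + 1) := by ring
      rw [pow_succ, Matrix.mul_apply] at hpos
      obtain ⟨l, hl⟩ : ∃ l : V, 0 < (P ^ L) j l * P l i := by
        by_contra h
        push_neg at h
        have : ∑ l : V, (P ^ L) j l * P l i ≤ 0 :=
          Finset.sum_nonpos fun l _ => h l
        linarith
      have hPL : 0 < (P ^ L) j l := by
        rcases (matrix_pow_nonneg hP L j l).lt_or_eq with h | h
        · exact h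
        · rw [← h] at hl; simp at hl
      have hPli : 0 < P l i := by
        rcases (hP l i).lt_or_eq with h | h
        · exact h
        · rw [← h] at hl; simp at hl
      by_cases hli : l = i
      · subst hli
        have hpad : p₀ ^ (τbar + 1) * u s l ≤ u (s + (τbar + 1)) l :=
          dsol_pad hP hτ hdiag hp₀pos hp₀min hu hn hs l (τbar + 1)
        have hih : p₀ ^ (t - (s + (τbar + 1))) * u (s + (τbar + 1)) l ≤ u t j :=
          ih l j hPL (s + (τbar + 1)) t (by omega) (by omega)
        have hnn : 0 ≤ p₀ ^ (t - (s + (τbar + 1))) := by positivity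
        calc p₀ ^ (t - s) * u s l
            = p₀ ^ (t - (s + (τbar + 1))) * (p₀ ^ (τbar + 1) * u s l) := by
              rw [← mul_assoc, ← pow_add]
              congr 2
              omega
          _ ≤ p₀ ^ (t - (s + (τbar + 1))) * u (s + (τbar + 1)) l :=
              mul_le_mul_of_nonneg_left hpad hnn
          _ ≤ u t j := hih
      · have hhop : P l i * u s i ≤ u (s + τ l i s + 1) l :=
          dsol_hop hP hτ hu hn hs (fun h => hli h.symm)
        set a := s + τ l i s + 1 with ha
        have haub : a ≤ s + τbar + 1 := by have := hτ l i s; omega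
        have hih : p₀ ^ (t - a) * u a l ≤ u t j :=
          ih l j hPL a t (by omega) (by omega)
        have h0 : 0 ≤ u s i := hn _ _ (by omega)
        have h1 : p₀ ^ (a - s) * u s i ≤ p₀ * u s i := by
          refine mul_le_mul_of_nonneg_right ?_ h0
          calc p₀ ^ (a - s) ≤ p₀ ^ 1 :=
                pow_le_pow_of_le_one (le_of_lt hp₀pos) hp₀le1 (by omega)
            _ = p₀ := pow_one p₀
        have h2 : p₀ * u s i ≤ P l i * u s i :=
          mul_le_mul_of_nonneg_right (hp₀min l i hPli) h0
        have hnn : 0 ≤ p₀ ^ (t - a) := by positivity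
        calc p₀ ^ (t - s) * u s i
            = p₀ ^ (t - a) * (p₀ ^ (a - s) * u s i) := by
              rw [← mul_assoc, ← pow_add]
              congr 2
              omega
          _ ≤ p₀ ^ (t - a) * (p₀ * u s i) := mul_le_mul_of_nonneg_left h1 hnn
          _ ≤ p₀ ^ (t - a) * (P l i * u s i) := mul_le_mul_of_nonneg_left h2 hnn
          _ ≤ p₀ ^ (t - a) * u a l := mul_le_mul_of_nonneg_left hhop hnn
          _ ≤ u t j := hih

lemma exists_pmin [Nonempty V] (hP : ∀ j i, 0 ≤ P j i) (hcol : ∀ i, ∑ j, P j i = 1)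
    (hdiag : ∀ j, 0 < P j j) :
    ∃ p₀ : ℝ, 0 < p₀ ∧ p₀ ≤ 1 ∧ ∀ j i, 0 < P j i → p₀ ≤ P j i := by
  classical
  set s : Finset (V × V) := Finset.univ.filter (fun p : V × V => 0 < P p.1 p.2) with hsdef
  have v : V := Classical.arbitrary V
  have hvmem : (v, v) ∈ s :=
    Finset.mem_filter.mpr ⟨Finset.mem_univ _, hdiag v⟩
  have hne : s.Nonempty := ⟨(v, v), hvmem⟩
  refine ⟨s.inf' hne (fun p => P p.1 p.2), ?_, ?_, ?_⟩
  · obtain ⟨p, hp, hep⟩ := Finset.exists_mem_eq_inf' hne (fun p => P p.1 p.2)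
    rw [hep]
    exact (Finset.mem_filter.mp hp).2
  · have h1 : s.inf' hne (fun p => P p.1 p.2) ≤ P v v := Finset.inf'_le _ hvmem
    have h2 : P v v ≤ 1 := by
      have h3 := Finset.single_le_sum (f := fun j => P j v) (fun j _ => hP j v)
        (Finset.mem_univ v)
      rw [hcol v] at h3
      exact h3
    linarith
  · intro j i h
    have hm : (j, i) ∈ s := Finset.mem_filter.mpr ⟨Finset.mem_univ _, h⟩
    exact Finset.inf'_le _ hm

lemma sum_erase_swap (F : V → V → ℝ) :
    ∑ j : V, ∑ i ∈ Finset.univ.erase j, F j i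
      = ∑ i : V, ∑ j ∈ Finset.univ.erase i, F j i := by
  simp only [Finset.sum_erase_eq_sub (Finset.mem_univ _)]
  rw [Finset.sum_sub_distrib, Finset.sum_sub_distrib, Finset.sum_comm]

lemma filter_key (hτ : ∀ (j i : V) m, τ j i m ≤ τbar) {z : ℕ → V → ℝ} (j i : V) (k : ℕ) :
    (∑ m ∈ (Finset.range (k + 1)).filter (fun m => m + τ j i m = k), z m i)
      + (∑ m ∈ (Finset.range (k + 1)).filter (fun m => k + 1 ≤ m + τ j i m), z m i)
      = (∑ m ∈ (Finset.range k).filter (fun m => k ≤ m + τ j i m), z m i) + z k i := by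
  simp only [Finset.sum_filter]
  rw [Finset.range_add_one, Finset.sum_insert (by simp), Finset.sum_insert (by simp)]
  have hbd : (if k + τ j i k = k then z k i else 0)
      + (if k + 1 ≤ k + τ j i k then z k i else 0) = z k i := by
    split_ifs <;> first | omega | simp
  have hpt : ∀ m, (if m + τ j i m = k then z m i else 0)
      + (if k + 1 ≤ m + τ j i m then z m i else 0)
      = (if k ≤ m + τ j i m then z m i else 0) := by
    intro m
    split_ifs <;> first | omega | simp
  have hS12 : (∑ x ∈ Finset.range k, if x + τ j i x = k then z x i else 0)
      + (∑ x ∈ Finset.range k, if k + 1 ≤ x + τ j i x then z x i else 0)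
      = ∑ x ∈ Finset.range k, if k ≤ x + τ j i x then z x i else 0 := by
    rw [← Finset.sum_add_distrib]
    exact Finset.sum_congr rfl fun m _ => hpt m
  linarith

lemma conservation (hcol : ∀ i, ∑ j, P j i = 1) (hτ : ∀ (j i : V) m, τ j i m ≤ τbar)
    {z : ℕ → V → ℝ} (hz : DSol P τ z) :
    ∀ k, (∑ j : V, z k j)
      + (∑ j : V, ∑ i ∈ Finset.univ.erase j,
          P j i * ∑ m ∈ (Finset.range k).filter (fun m => k ≤ m + τ j i m), z m i)
      = ∑ j : V, z 0 j := by
  intro k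
  induction k with
  | zero => simp
  | succ k IH =>
      rw [← IH]
      have hzs : ∑ j : V, z (k + 1) j
          = (∑ j : V, P j j * z k j)
            + ∑ j : V, ∑ i ∈ Finset.univ.erase j,
              P j i * ∑ m ∈ (Finset.range (k + 1)).filter (fun m => m + τ j i m = k), z m i := by
        rw [← Finset.sum_add_distrib]
        exact Finset.sum_congr rfl fun j _ => hz k j
      rw [hzs]
      have hcomb : (∑ j : V, ∑ i ∈ Finset.univ.erase j,
            P j i * ∑ m ∈ (Finset.range (k + 1)).filter (fun m => m + τ j i m = k), z m i)
          + (∑ j : V, ∑ i ∈ Finset.univ.erase j,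
            P j i * ∑ m ∈ (Finset.range (k + 1)).filter (fun m => k + 1 ≤ m + τ j i m), z m i)
          = (∑ j : V, ∑ i ∈ Finset.univ.erase j,
            P j i * ∑ m ∈ (Finset.range k).filter (fun m => k ≤ m + τ j i m), z m i)
            + ∑ j : V, ∑ i ∈ Finset.univ.erase j, P j i * z k i := by
        rw [← Finset.sum_add_distrib, ← Finset.sum_add_distrib]
        refine Finset.sum_congr rfl fun j _ => ?_
        rw [← Finset.sum_add_distrib, ← Finset.sum_add_distrib]
        refine Finset.sum_congr rfl fun i _ => ?_
        rw [← mul_add, ← mul_add, filter_key hτ j i k]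
      have hstoch : (∑ j : V, P j j * z k j)
          + ∑ j : V, ∑ i ∈ Finset.univ.erase j, P j i * z k i = ∑ j : V, z k j := by
        rw [sum_erase_swap (fun j i => P j i * z k i)]
        have : ∀ i : V, ∑ j ∈ Finset.univ.erase i, P j i * z k i
            = z k i - P i i * z k i := by
          intro i
          rw [Finset.sum_erase_eq_sub (Finset.mem_univ i), ← Finset.sum_mul, hcol i, one_mul]
        rw [Finset.sum_congr rfl fun i _ => this i]
        rw [Finset.sum_sub_distrib]
        ring
      linarith

section Windows

variable [Nonempty V] (μ : ℕ → V → ℝ)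

lemma window_ne (w k : ℕ) :
    ((Finset.Icc (k - w) k) ×ˢ (Finset.univ : Finset V)).Nonempty :=
  Finset.Nonempty.product (Finset.nonempty_Icc.mpr (Nat.sub_le k w)) Finset.univ_nonempty

/-- sliding-window maximum of the ratios -/
noncomputable def Wsup (w k : ℕ) : ℝ :=
  ((Finset.Icc (k - w) k) ×ˢ (Finset.univ : Finset V)).sup' (window_ne w k)
    fun p => μ p.1 p.2

/-- sliding-window minimum of the ratios -/
noncomputable def Winf (w k : ℕ) : ℝ :=
  ((Finset.Icc (k - w) k) ×ˢ (Finset.univ : Finset V)).inf' (window_ne w k)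
    fun p => μ p.1 p.2

lemma le_Wsup {w k t : ℕ} (j : V) (h1 : k - w ≤ t) (h2 : t ≤ k) :
    μ t j ≤ Wsup μ w k := by
  have hm : ((t, j) : ℕ × V) ∈ (Finset.Icc (k - w) k) ×ˢ (Finset.univ : Finset V) :=
    Finset.mem_product.mpr ⟨Finset.mem_Icc.mpr ⟨h1, h2⟩, Finset.mem_univ j⟩
  exact Finset.le_sup' (fun p : ℕ × V => μ p.1 p.2) hm

lemma Winf_le {w k t : ℕ} (j : V) (h1 : k - w ≤ t) (h2 : t ≤ k) :
    Winf μ w k ≤ μ t j := by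
  have hm : ((t, j) : ℕ × V) ∈ (Finset.Icc (k - w) k) ×ˢ (Finset.univ : Finset V) :=
    Finset.mem_product.mpr ⟨Finset.mem_Icc.mpr ⟨h1, h2⟩, Finset.mem_univ j⟩
  exact Finset.inf'_le (fun p : ℕ × V => μ p.1 p.2) hm

lemma Wsup_le {w k : ℕ} {b : ℝ} (h : ∀ t j, k - w ≤ t → t ≤ k → μ t j ≤ b) :
    Wsup μ w k ≤ b := by
  refine Finset.sup'_le _ _ fun p hp => ?_
  rw [Finset.mem_product, Finset.mem_Icc] at hp
  exact h p.1 p.2 hp.1.1 hp.1.2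

lemma le_Winf {w k : ℕ} {b : ℝ} (h : ∀ t j, k - w ≤ t → t ≤ k → b ≤ μ t j) :
    b ≤ Winf μ w k := by
  refine Finset.le_inf' _ _ fun p hp => ?_
  rw [Finset.mem_product, Finset.mem_Icc] at hp
  exact h p.1 p.2 hp.1.1 hp.1.2

lemma exists_Wsup (w k : ℕ) :
    ∃ t j, (k - w ≤ t ∧ t ≤ k) ∧ Wsup μ w k = μ t j := by
  obtain ⟨p, hp, he⟩ := Finset.exists_mem_eq_sup' (window_ne (V := V) w k)
    (fun p : ℕ × V => μ p.1 p.2)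
  rw [Finset.mem_product, Finset.mem_Icc] at hp
  exact ⟨p.1, p.2, ⟨hp.1.1, hp.1.2⟩, he⟩

lemma exists_Winf (w k : ℕ) :
    ∃ t j, (k - w ≤ t ∧ t ≤ k) ∧ Winf μ w k = μ t j := by
  obtain ⟨p, hp, he⟩ := Finset.exists_mem_eq_inf' (window_ne (V := V) w k)
    (fun p : ℕ × V => μ p.1 p.2)
  rw [Finset.mem_product, Finset.mem_Icc] at hp
  exact ⟨p.1, p.2, ⟨hp.1.1, hp.1.2⟩, he⟩

end Windows

end AsyncRC

open Filter

set_option maxHeartbeats 2000000 in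
/-- Theorem 1: for the robustified (asynchronous) ratio-consensus iterations
with bounded delays, for every tolerance `ε > 0` and every positive window
length `W` (in particular `W = (1+τ̄)·D`), there is a round `r₀` after which
the spread of the ratios sampled every `W` steps is below `ε`; hence the
distributed termination test of Algorithm 2 is passed after finitely many
rounds, i.e. Algorithm 2 converges in finite time. -/
theorem finite_time_async_termination
    {V : Type*} [Fintype V] [DecidableEq V] [Nonempty V]
    (P : Matrix V V ℝ)
    (hnonneg : ∀ j i, 0 ≤ P j i)
    (hcol : ∀ i, ∑ j, P j i = 1)
    (hprim : ∃ m : ℕ, 1 ≤ m ∧ ∀ j i, 0 < (P ^ m) j i)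
    (hdiag : ∀ j, 0 < P j j)
    (τbar : ℕ) (τ : V → V → ℕ → ℕ)
    (hτ : ∀ (j i : V) (m : ℕ), τ j i m ≤ τbar)
    (y₀ z₀ : V → ℝ) (hz₀ : ∀ i, 0 < z₀ i)
    (y z : ℕ → V → ℝ)
    (hy0 : y 0 = y₀) (hz0 : z 0 = z₀)
    (hy : ∀ k (j : V), y (k + 1) j =
      P j j * y k j + ∑ i ∈ Finset.univ.erase j,
        P j i * ∑ m ∈ (Finset.range (k + 1)).filter (fun m => m + τ j i m = k), y m i)
    (hz : ∀ k (j : V), z (k + 1) j =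
      P j j * z k j + ∑ i ∈ Finset.univ.erase j,
        P j i * ∑ m ∈ (Finset.range (k + 1)).filter (fun m => m + τ j i m = k), z m i)
    (μ : ℕ → V → ℝ) (hμ : ∀ k (j : V), μ k j = y k j / z k j) :
    ∀ ε > (0 : ℝ), ∀ W : ℕ, 0 < W →
      ∃ r₀ : ℕ, ∀ r, r₀ ≤ r →
        Finset.univ.sup' Finset.univ_nonempty (μ (r * W)) -
          Finset.univ.inf' Finset.univ_nonempty (μ (r * W)) < ε := by
  classical
  intro ε hε W hW
  have hysol : DSol P τ y := hy
  have hzsol : DSol P τ z := hz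
  obtain ⟨mprim, hm1, hmpos⟩ := hprim
  obtain ⟨p₀, hp₀pos, hp₀le1, hp₀min⟩ := exists_pmin hnonneg hcol hdiag
  have hNpos : 0 < Fintype.card V := Fintype.card_pos
  set S : ℝ := ∑ i, z₀ i with hSdef
  have hSpos : 0 < S := Finset.sum_pos (fun i _ => hz₀ i) Finset.univ_nonempty
  set Mp : ℕ := mprim * (τbar + 1) with hMp
  set K : ℕ := Mp + 2 * τbar + 1 with hKdef
  set E : ℕ := K + τbar with hEdef
  set k₁ : ℕ := K + τbar with hk₁def
  have hτN : (0:ℝ) < ((τbar : ℝ) + 1) * (Fintype.card V : ℝ) := by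
    have h : (0:ℝ) < (Fintype.card V : ℝ) := by exact_mod_cast hNpos
    positivity
  set δ₀ : ℝ := S / (((τbar : ℝ) + 1) * (Fintype.card V : ℝ)) with hδ₀def
  have hδ₀pos : 0 < δ₀ := div_pos hSpos hτN
  set δ : ℝ := p₀ ^ E * δ₀ with hδdef
  have hδpos : 0 < δ := by positivity
  set c : ℝ := p₀ ^ E * δ / S with hcdef
  have hcpos : 0 < c := by positivity
  set β : ℝ := min c (1/2) with hβdef
  have hβpos : 0 < β := lt_min hcpos (by norm_num)
  have hβhalf : β ≤ 1/2 := min_le_right _ _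
  have hβc : β ≤ c := min_le_left _ _
  -- basic facts about z
  have hznn : ∀ t j, 0 ≤ z t j :=
    dsol_nonneg0 hnonneg hzsol (fun j => by rw [hz0]; exact (hz₀ j).le)
  have hzpos : ∀ t j, 0 < z t j := by
    intro t
    induction t with
    | zero => intro j; rw [hz0]; exact hz₀ j
    | succ t ih =>
        intro j
        rw [hz t j]
        have h2 : 0 ≤ ∑ i ∈ Finset.univ.erase j,
            P j i * ∑ m ∈ (Finset.range (t + 1)).filter (fun m => m + τ j i m = t), z m i :=
          Finset.sum_nonneg fun i _ => mul_nonneg (hnonneg j i)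
            (Finset.sum_nonneg fun m _ => hznn m i)
        nlinarith [mul_pos (hdiag j) (ih j)]
  have hyzμ : ∀ t j, y t j = μ t j * z t j := by
    intro t j
    rw [hμ t j, div_mul_cancel₀]
    exact (hzpos t j).ne'
  have hcons := conservation hcol hτ hzsol
  have hz0S : ∑ j : V, z 0 j = S := by rw [hz0]
  have hzS : ∀ t j, z t j ≤ S := by
    intro t j
    have h1 := hcons t
    rw [hz0S] at h1
    have hQnn : 0 ≤ ∑ j : V, ∑ i ∈ Finset.univ.erase j,
        P j i * ∑ m ∈ (Finset.range t).filter (fun m => t ≤ m + τ j i m), z m i :=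
      Finset.sum_nonneg fun j _ => Finset.sum_nonneg fun i _ =>
        mul_nonneg (hnonneg j i) (Finset.sum_nonneg fun m _ => hznn m i)
    have h2 : z t j ≤ ∑ j' : V, z t j' :=
      Finset.single_le_sum (fun j' _ => hznn t j') (Finset.mem_univ j)
    linarith
  -- uniform positive lower bound on z
  have hδlem : ∀ t, K ≤ t → ∀ j, δ ≤ z t j := by
    intro t hKt j
    set t' : ℕ := t - Mp with ht'def
    have ht'1 : 2*τbar + 1 ≤ t' := by omega
    set G : V → ℝ := fun i => ∑ m ∈ Finset.Icc (t' - τbar) (t' - 1), z m i with hGdef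
    have hGnn : ∀ i, 0 ≤ G i := fun i => Finset.sum_nonneg fun m _ => hznn m i
    have hQle : (∑ j : V, ∑ i ∈ Finset.univ.erase j,
        P j i * ∑ m ∈ (Finset.range t').filter (fun m => t' ≤ m + τ j i m), z m i)
        ≤ ∑ m ∈ Finset.Icc (t' - τbar) (t' - 1), ∑ i : V, z m i := by
      have hR : ∀ j i : V, (∑ m ∈ (Finset.range t').filter
          (fun m => t' ≤ m + τ j i m), z m i) ≤ G i := by
        intro j i
        apply Finset.sum_le_sum_of_subset_of_nonneg
        · intro m hm
          have h1 := Finset.mem_filter.mp hm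
          have h2 := Finset.mem_range.mp h1.1
          have h3 := hτ j i m
          have h4 := h1.2
          rw [Finset.mem_Icc]
          omega
        · intro m _ _; exact hznn m i
      have hstep1 : (∑ j : V, ∑ i ∈ Finset.univ.erase j,
          P j i * ∑ m ∈ (Finset.range t').filter (fun m => t' ≤ m + τ j i m), z m i)
          ≤ ∑ j : V, ∑ i ∈ Finset.univ.erase j, P j i * G i :=
        Finset.sum_le_sum fun j _ => Finset.sum_le_sum fun i _ =>
          mul_le_mul_of_nonneg_left (hR j i) (hnonneg j i)
      have hstep2 : (∑ j : V, ∑ i ∈ Finset.univ.erase j, P j i * G i) ≤ ∑ i : V, G i := by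
        rw [sum_erase_swap (fun j i => P j i * G i)]
        refine Finset.sum_le_sum fun i _ => ?_
        have h1 : ∑ j ∈ Finset.univ.erase i, P j i * G i
            = (∑ j ∈ Finset.univ.erase i, P j i) * G i := by rw [Finset.sum_mul]
        have h2 : ∑ j ∈ Finset.univ.erase i, P j i = 1 - P i i := by
          rw [Finset.sum_erase_eq_sub (Finset.mem_univ i), hcol i]
        rw [h1, h2]
        nlinarith [hGnn i, hdiag i]
      have hstep3 : (∑ i : V, G i)
          = ∑ m ∈ Finset.Icc (t' - τbar) (t' - 1), ∑ i : V, z m i := by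
        calc (∑ i : V, G i)
            = ∑ i : V, ∑ m ∈ Finset.Icc (t' - τbar) (t' - 1), z m i := by
              simp only [hGdef]
          _ = _ := Finset.sum_comm
      linarith
    have hcons' := hcons t'
    rw [hz0S] at hcons'
    have hsplit : Finset.Icc (t' - τbar) t' = insert t' (Finset.Icc (t' - τbar) (t' - 1)) := by
      ext x
      simp only [Finset.mem_Icc, Finset.mem_insert]
      omega
    have htmem : t' ∉ Finset.Icc (t' - τbar) (t' - 1) := by
      rw [Finset.mem_Icc]; omega
    have hwin : S ≤ ∑ m ∈ Finset.Icc (t' - τbar) t', ∑ i : V, z m i := by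
      rw [hsplit, Finset.sum_insert htmem]
      linarith
    obtain ⟨m', hm'mem, i', hzi'⟩ : ∃ m' ∈ Finset.Icc (t' - τbar) t', ∃ i' : V, δ₀ ≤ z m' i' := by
      by_contra hcon
      push_neg at hcon
      have hlt : ∀ m ∈ Finset.Icc (t' - τbar) t',
          ∑ i : V, z m i < (Fintype.card V : ℝ) * δ₀ := by
        intro m hm
        have hl := Finset.sum_lt_sum_of_nonempty Finset.univ_nonempty
          (f := fun i => z m i) (g := fun _ => δ₀) (fun i _ => hcon m hm i)
        rw [Finset.sum_const, Finset.card_univ, nsmul_eq_mul] at hl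
        exact hl
      have hbig := Finset.sum_lt_sum_of_nonempty (Finset.nonempty_Icc.mpr (by omega)) hlt
      rw [Finset.sum_const, Nat.card_Icc] at hbig
      have hcard : t' + 1 - (t' - τbar) = τbar + 1 := by omega
      rw [hcard, nsmul_eq_mul] at hbig
      push_cast at hbig
      have hexact : ((τbar : ℝ) + 1) * ((Fintype.card V : ℝ) * δ₀) = S := by
        rw [hδ₀def]
        field_simp
      linarith
    have hm'm := Finset.mem_Icc.mp hm'mem
    have hreach := dsol_reach hnonneg hτ hdiag hp₀pos hp₀le1 hp₀min hzsol 0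
      (fun m j _ => hznn m j) mprim i' j (hmpos j i') m' t (by omega)
      (by rw [← hMp]; omega)
    have hexp : p₀ ^ E ≤ p₀ ^ (t - m') :=
      pow_le_pow_of_le_one hp₀pos.le hp₀le1 (by omega)
    calc δ = p₀ ^ E * δ₀ := hδdef
      _ ≤ p₀ ^ (t - m') * z m' i' :=
          mul_le_mul hexp hzi' hδ₀pos.le (pow_nonneg hp₀pos.le _)
      _ ≤ z t j := hreach
  -- invariance of one-sided bounds
  have hupper : ∀ (b : ℝ) (w k : ℕ), τbar ≤ w → w ≤ k →
      (∀ t i, k - w ≤ t → t ≤ k → y t i ≤ b * z t i) →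
      ∀ t, k - w ≤ t → ∀ j, y t j ≤ b * z t j := by
    intro b w k hτw hwk hb
    have hcomb : DSol P τ (fun t j => b * z t j + (-1) * y t j) :=
      dsol_combo hzsol hysol b (-1)
    have hbase : ∀ t (j : V), (k - w) ≤ t → t ≤ (k - w) + τbar →
        0 ≤ b * z t j + (-1) * y t j := by
      intro t j h1 h2
      have := hb t j h1 (by omega)
      linarith
    have hnn := dsol_nonneg hnonneg hτ hcomb (k - w) hbase
    intro t ht j
    have h := hnn t ht j
    linarith
  have hlower : ∀ (b : ℝ) (w k : ℕ), τbar ≤ w → w ≤ k →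
      (∀ t i, k - w ≤ t → t ≤ k → b * z t i ≤ y t i) →
      ∀ t, k - w ≤ t → ∀ j, b * z t j ≤ y t j := by
    intro b w k hτw hwk hb
    have hcomb : DSol P τ (fun t j => (-b) * z t j + 1 * y t j) :=
      dsol_combo hzsol hysol (-b) 1
    have hbase : ∀ t (j : V), (k - w) ≤ t → t ≤ (k - w) + τbar →
        0 ≤ (-b) * z t j + 1 * y t j := by
      intro t j h1 h2
      have := hb t j h1 (by omega)
      linarith
    have hnn := dsol_nonneg hnonneg hτ hcomb (k - w) hbase
    intro t ht j
    have h := hnn t ht j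
    linarith
  have hμle : ∀ (t : ℕ) (j : V) (C : ℝ), y t j ≤ C * z t j → μ t j ≤ C := by
    intro t j C h
    rw [hμ t j, div_le_iff₀ (hzpos t j)]
    linarith
  have hμge : ∀ (t : ℕ) (j : V) (C : ℝ), C * z t j ≤ y t j → C ≤ μ t j := by
    intro t j C h
    rw [hμ t j, le_div_iff₀ (hzpos t j)]
    linarith
  -- monotonicity of windowed max / min
  have hMdec : ∀ k, k₁ ≤ k → Wsup μ (2*τbar) (k+1) ≤ Wsup μ (2*τbar) k := by
    intro k hk
    have hkτ : τbar ≤ k := by omega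
    refine Wsup_le μ fun t j h1 h2 => ?_
    rcases Nat.lt_or_ge t (k+1) with h | h
    · exact le_Wsup μ j (by omega) (by omega)
    · have ht : t = k + 1 := by omega
      subst ht
      have hb : ∀ t' (i : V), k - τbar ≤ t' → t' ≤ k →
          y t' i ≤ Wsup μ (2*τbar) k * z t' i := by
        intro t' i ha hb'
        have hμb := le_Wsup μ (k := k) (w := 2*τbar) (t := t') i (by omega) hb'
        rw [hyzμ t' i]
        exact mul_le_mul_of_nonneg_right hμb (hznn t' i)
      have := hupper (Wsup μ (2*τbar) k) τbar k le_rfl hkτ hb (k+1) (by omega) j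
      exact hμle _ _ _ this
  have hmdec : ∀ k, k₁ ≤ k → Winf μ (2*τbar) k ≤ Winf μ (2*τbar) (k+1) := by
    intro k hk
    have hkτ : τbar ≤ k := by omega
    refine le_Winf μ fun t j h1 h2 => ?_
    rcases Nat.lt_or_ge t (k+1) with h | h
    · exact Winf_le μ j (by omega) (by omega)
    · have ht : t = k + 1 := by omega
      subst ht
      have hb : ∀ t' (i : V), k - τbar ≤ t' → t' ≤ k →
          Winf μ (2*τbar) k * z t' i ≤ y t' i := by
        intro t' i ha hb'
        have hμb := Winf_le μ (k := k) (w := 2*τbar) (t := t') i (by omega) hb'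
        rw [hyzμ t' i]
        exact mul_le_mul_of_nonneg_right hμb (hznn t' i)
      have := hlower (Winf μ (2*τbar) k) τbar k le_rfl hkτ hb (k+1) (by omega) j
      exact hμge _ _ _ this
  have hMmono : ∀ k k', k₁ ≤ k → k ≤ k' → Wsup μ (2*τbar) k' ≤ Wsup μ (2*τbar) k := by
    intro k k' hk hkk
    induction k', hkk using Nat.le_induction with
    | base => exact le_rfl
    | succ n hn ih => exact le_trans (hMdec n (le_trans hk hn)) ih
  have hmmono : ∀ k k', k₁ ≤ k → k ≤ k' → Winf μ (2*τbar) k ≤ Winf μ (2*τbar) k' := by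
    intro k k' hk hkk
    induction k', hkk using Nat.le_induction with
    | base => exact le_rfl
    | succ n hn ih => exact le_trans ih (hmdec n (le_trans hk hn))
  -- the contraction estimates
  have hCup : ∀ k, k₁ ≤ k → ∀ t (j : V), k + K - 2*τbar ≤ t → t ≤ k + K →
      μ t j ≤ Wsup μ (2*τbar) k - β * (Wsup μ (2*τbar) k - Winf μ τbar k) := by
    intro k hk t j ht1 ht2
    set b := Wsup μ (2*τbar) k with hbdef
    obtain ⟨m', i', ⟨hm1, hm2⟩, hmn_eq⟩ := exists_Winf μ τbar k
    have hbnd : ∀ t' (i : V), k - 2*τbar ≤ t' → t' ≤ k → y t' i ≤ b * z t' i := by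
      intro t' i h1 h2
      rw [hyzμ t' i]
      exact mul_le_mul_of_nonneg_right (le_Wsup μ i h1 h2) (hznn t' i)
    have hwide := hupper b (2*τbar) k (by omega) (by omega) hbnd
    have husol : DSol P τ (fun t j => b * z t j + (-1) * y t j) :=
      dsol_combo hzsol hysol b (-1)
    have hunn : ∀ m (j : V), k - 2*τbar ≤ m → 0 ≤ b * z m j + (-1) * y m j := by
      intro m j hm
      have := hwide m hm j
      linarith
    have hreach : p₀ ^ (t - m') * (b * z m' i' + (-1) * y m' i')
        ≤ b * z t j + (-1) * y t j :=
      dsol_reach hnonneg hτ hdiag hp₀pos hp₀le1 hp₀min husol (k - 2*τbar)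
        hunn mprim i' j (hmpos j i') m' t (by omega) (by rw [← hMp]; omega)
    have hsrc : b * z m' i' + (-1) * y m' i' = (b - Winf μ τbar k) * z m' i' := by
      rw [hyzμ m' i', ← hmn_eq]; ring
    have hμmb : μ m' i' ≤ b := le_Wsup μ i' (by omega) hm2
    have hg0 : 0 ≤ b - Winf μ τbar k := by rw [hmn_eq]; linarith
    have hδz : δ ≤ z m' i' := hδlem m' (by omega) i'
    have hexp : p₀ ^ E ≤ p₀ ^ (t - m') :=
      pow_le_pow_of_le_one hp₀pos.le hp₀le1 (by omega)
    set g := b - Winf μ τbar k with hgdef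
    have h3 : p₀ ^ E * (g * δ) ≤ p₀ ^ (t - m') * (g * z m' i') :=
      mul_le_mul hexp (mul_le_mul_of_nonneg_left hδz hg0)
        (mul_nonneg hg0 hδpos.le) (pow_nonneg hp₀pos.le _)
    have h4 : p₀ ^ (t - m') * (g * z m' i') ≤ b * z t j + (-1) * y t j := by
      rw [hsrc] at hreach
      exact hreach
    have h5 : c * z t j ≤ p₀ ^ E * δ := by
      calc c * z t j ≤ c * S := mul_le_mul_of_nonneg_left (hzS t j) hcpos.le
        _ = p₀ ^ E * δ := by rw [hcdef]; field_simp
    have h6 : β * g * z t j ≤ b * z t j + (-1) * y t j := by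
      have hzt := hznn t j
      calc β * g * z t j ≤ c * g * z t j :=
            mul_le_mul_of_nonneg_right (mul_le_mul_of_nonneg_right hβc hg0) hzt
        _ = g * (c * z t j) := by ring
        _ ≤ g * (p₀ ^ E * δ) := mul_le_mul_of_nonneg_left h5 hg0
        _ = p₀ ^ E * (g * δ) := by ring
        _ ≤ _ := le_trans h3 h4
    apply hμle
    have hexpand : (b - β * g) * z t j = b * z t j - β * g * z t j := by ring
    linarith [h6, hexpand]
  have hClo : ∀ k, k₁ ≤ k → ∀ t (j : V), k + K - 2*τbar ≤ t → t ≤ k + K →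
      Winf μ (2*τbar) k + β * (Wsup μ τbar k - Winf μ (2*τbar) k) ≤ μ t j := by
    intro k hk t j ht1 ht2
    set a := Winf μ (2*τbar) k with hadef
    obtain ⟨m', i', ⟨hm1, hm2⟩, hmx_eq⟩ := exists_Wsup μ τbar k
    have hbnd : ∀ t' (i : V), k - 2*τbar ≤ t' → t' ≤ k → a * z t' i ≤ y t' i := by
      intro t' i h1 h2
      rw [hyzμ t' i]
      exact mul_le_mul_of_nonneg_right (Winf_le μ i h1 h2) (hznn t' i)
    have hwide := hlower a (2*τbar) k (by omega) (by omega) hbnd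
    have husol : DSol P τ (fun t j => (-a) * z t j + 1 * y t j) :=
      dsol_combo hzsol hysol (-a) 1
    have hunn : ∀ m (j : V), k - 2*τbar ≤ m → 0 ≤ (-a) * z m j + 1 * y m j := by
      intro m j hm
      have := hwide m hm j
      linarith
    have hreach : p₀ ^ (t - m') * ((-a) * z m' i' + 1 * y m' i')
        ≤ (-a) * z t j + 1 * y t j :=
      dsol_reach hnonneg hτ hdiag hp₀pos hp₀le1 hp₀min husol (k - 2*τbar)
        hunn mprim i' j (hmpos j i') m' t (by omega) (by rw [← hMp]; omega)
    have hsrc : (-a) * z m' i' + 1 * y m' i' = (Wsup μ τbar k - a) * z m' i' := by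
      rw [hyzμ m' i', ← hmx_eq]; ring
    have hμmb : a ≤ μ m' i' := Winf_le μ i' (by omega) hm2
    have hg0 : 0 ≤ Wsup μ τbar k - a := by rw [hmx_eq]; linarith
    have hδz : δ ≤ z m' i' := hδlem m' (by omega) i'
    have hexp : p₀ ^ E ≤ p₀ ^ (t - m') :=
      pow_le_pow_of_le_one hp₀pos.le hp₀le1 (by omega)
    set g := Wsup μ τbar k - a with hgdef
    have h3 : p₀ ^ E * (g * δ) ≤ p₀ ^ (t - m') * (g * z m' i') :=
      mul_le_mul hexp (mul_le_mul_of_nonneg_left hδz hg0)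
        (mul_nonneg hg0 hδpos.le) (pow_nonneg hp₀pos.le _)
    have h4 : p₀ ^ (t - m') * (g * z m' i') ≤ (-a) * z t j + 1 * y t j := by
      rw [hsrc] at hreach
      exact hreach
    have h5 : c * z t j ≤ p₀ ^ E * δ := by
      calc c * z t j ≤ c * S := mul_le_mul_of_nonneg_left (hzS t j) hcpos.le
        _ = p₀ ^ E * δ := by rw [hcdef]; field_simp
    have h6 : β * g * z t j ≤ (-a) * z t j + 1 * y t j := by
      have hzt := hznn t j
      calc β * g * z t j ≤ c * g * z t j :=
            mul_le_mul_of_nonneg_right (mul_le_mul_of_nonneg_right hβc hg0) hzt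
        _ = g * (c * z t j) := by ring
        _ ≤ g * (p₀ ^ E * δ) := mul_le_mul_of_nonneg_left h5 hg0
        _ = p₀ ^ E * (g * δ) := by ring
        _ ≤ _ := le_trans h3 h4
    apply hμge
    have hexpand : (a + β * g) * z t j = a * z t j + β * g * z t j := by ring
    linarith [h6, hexpand]
  have hMstep : ∀ k, k₁ ≤ k →
      Wsup μ (2*τbar) (k+K) ≤ Wsup μ (2*τbar) k - β * (Wsup μ (2*τbar) k - Winf μ τbar k) := by
    intro k hk
    exact Wsup_le μ fun t j h1 h2 => hCup k hk t j h1 h2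
  have hmstep : ∀ k, k₁ ≤ k →
      Winf μ (2*τbar) k + β * (Wsup μ τbar k - Winf μ (2*τbar) k) ≤ Winf μ (2*τbar) (k+K) := by
    intro k hk
    exact le_Winf μ fun t j h1 h2 => hClo k hk t j h1 h2
  have hmn_le_Mn : ∀ k, Winf μ τbar k ≤ Wsup μ τbar k := by
    intro k
    have j : V := Classical.arbitrary V
    exact le_trans (Winf_le μ j (Nat.sub_le k τbar) le_rfl)
      (le_Wsup μ j (Nat.sub_le k τbar) le_rfl)
  have hspread_nonneg : ∀ k, 0 ≤ Wsup μ (2*τbar) k - Winf μ (2*τbar) k := by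
    intro k
    have j : V := Classical.arbitrary V
    have := le_trans (Winf_le μ (w := 2*τbar) (k := k) j (Nat.sub_le k (2*τbar)) le_rfl)
      (le_Wsup μ (w := 2*τbar) (k := k) j (Nat.sub_le k (2*τbar)) le_rfl)
    linarith
  have hstep : ∀ k, k₁ ≤ k →
      Wsup μ (2*τbar) (k+K) - Winf μ (2*τbar) (k+K)
        ≤ (1 - β) * (Wsup μ (2*τbar) k - Winf μ (2*τbar) k) := by
    intro k hk
    have h1 := hMstep k hk
    have h2 := hmstep k hk
    have h3 := hmn_le_Mn k
    have h4 : 0 ≤ β * (Wsup μ τbar k - Winf μ τbar k) := mul_nonneg hβpos.le (by linarith)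
    have hring : Wsup μ (2*τbar) k - β * (Wsup μ (2*τbar) k - Winf μ τbar k)
        - (Winf μ (2*τbar) k + β * (Wsup μ τbar k - Winf μ (2*τbar) k))
        = (1-β) * (Wsup μ (2*τbar) k - Winf μ (2*τbar) k)
          - β * (Wsup μ τbar k - Winf μ τbar k) := by ring
    linarith [h1, h2, h4, hring]
  have hiter : ∀ n, Wsup μ (2*τbar) (k₁ + n*K) - Winf μ (2*τbar) (k₁ + n*K)
      ≤ (1 - β)^n * (Wsup μ (2*τbar) k₁ - Winf μ (2*τbar) k₁) := by
    intro n
    induction n with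
    | zero => simp
    | succ n ih =>
        have hk : k₁ ≤ k₁ + n*K := Nat.le_add_right _ _
        have heq : k₁ + (n+1)*K = (k₁ + n*K) + K := by ring
        rw [heq]
        calc Wsup μ (2*τbar) ((k₁ + n*K) + K) - Winf μ (2*τbar) ((k₁ + n*K) + K)
            ≤ (1-β) * (Wsup μ (2*τbar) (k₁+n*K) - Winf μ (2*τbar) (k₁+n*K)) := hstep _ hk
          _ ≤ (1-β) * ((1-β)^n * (Wsup μ (2*τbar) k₁ - Winf μ (2*τbar) k₁)) :=
              mul_le_mul_of_nonneg_left ih (by linarith)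
          _ = (1-β)^(n+1) * (Wsup μ (2*τbar) k₁ - Winf μ (2*τbar) k₁) := by ring
  have hq1 : 1 - β < 1 := by linarith
  have hq0 : (0:ℝ) ≤ 1 - β := by linarith
  set s₁ := Wsup μ (2*τbar) k₁ - Winf μ (2*τbar) k₁ with hs₁def
  have hs₁nn : 0 ≤ s₁ := hspread_nonneg k₁
  obtain ⟨n, hn⟩ := exists_pow_lt_of_lt_one
    (div_pos hε (show (0:ℝ) < s₁ + 1 by linarith)) hq1
  refine ⟨k₁ + n*K, fun r hr => ?_⟩
  have h1 : k₁ + n*K ≤ r * W := le_trans hr (Nat.le_mul_of_pos_right r hW)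
  have h2 : Finset.univ.sup' Finset.univ_nonempty (μ (r*W)) ≤ Wsup μ (2*τbar) (r*W) :=
    Finset.sup'_le _ _ fun j _ => le_Wsup μ j (Nat.sub_le _ _) le_rfl
  have h3 : Winf μ (2*τbar) (r*W) ≤ Finset.univ.inf' Finset.univ_nonempty (μ (r*W)) :=
    Finset.le_inf' _ _ fun j _ => Winf_le μ j (Nat.sub_le _ _) le_rfl
  have h4 : Wsup μ (2*τbar) (r*W) - Winf μ (2*τbar) (r*W) ≤ (1-β)^n * s₁ :=
    le_trans (sub_le_sub (hMmono (k₁+n*K) (r*W) (Nat.le_add_right _ _) h1)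
      (hmmono (k₁+n*K) (r*W) (Nat.le_add_right _ _) h1)) (hiter n)
  have h5 : (1-β)^n * s₁ < ε := by
    have h6 : (1-β)^n * (s₁+1) < ε := by
      have h7 := (lt_div_iff₀ (show (0:ℝ) < s₁ + 1 by linarith)).mp hn
      linarith
    have h8 : (1-β)^n * s₁ ≤ (1-β)^n * (s₁+1) :=
      mul_le_mul_of_nonneg_left (by linarith) (pow_nonneg hq0 n)
    linarith
  linarith
end
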